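/- arXiv:0910.3071 — 6 statements merged into one kernel-verified Lean document; each statement's English description precedes it below -/
import Mathlib

section
/- Let p > 1 and let G = (V,E) be a connected, locally finite simple graph with uniformly bounded vertex degrees. Let f : V → ℝ satisfy f ∈ ℓ^p(V), D_p(f) < ∞, and Δ_p f ∈ ℓ^{p'}(V), where p' = p/(p−1). Then ⟨f, Δ_p f⟩ = −D_p(f). -/
open Filter Topology Metric
open scoped ENNReal Classical

/-- The `p`-Dirichlet energy of `f`: half the sum of `|f u - f v| ^ p` over
ordered pairs of adjacent vertices. -/
noncomputable def dirichletEnergy {V : Type*} (G : SimpleGraph V) (p : ℝ) (f : V → ℝ) : ℝ :=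
  (1 / 2) * ∑' q : {q : V × V // G.Adj q.1 q.2}, |f q.1.1 - f q.1.2| ^ p

/-- `f` is `p`-Dirichlet, i.e. `D_p(f) < ∞`. -/
def DirichletSummable {V : Type*} (G : SimpleGraph V) (p : ℝ) (f : V → ℝ) : Prop :=
  Summable fun q : {q : V × V // G.Adj q.1 q.2} => |f q.1.1 - f q.1.2| ^ p

/-- `G` is `p`-parabolic: for some vertex `v₀`, the infimum of `D_p(f)` over finitely
supported `f` with `f v₀ = 1` equals `0`. -/
def Parabolic {V : Type*} (G : SimpleGraph V) (p : ℝ) : Prop :=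
  ∃ v₀ : V, ∀ ε : ℝ, 0 < ε → ∃ f : V → ℝ,
    (Function.support f).Finite ∧ f v₀ = 1 ∧ dirichletEnergy G p f < ε

/-- The `p`-Laplacian `Δ_p f (v) = Σ_{u ~ v} |f u - f v| ^ (p-2) (f u - f v)`. -/
noncomputable def pLaplacian {V : Type*} (G : SimpleGraph V) (p : ℝ) (f : V → ℝ) (v : V) : ℝ :=
  ∑' u, if G.Adj u v then |f u - f v| ^ (p - 2) * (f u - f v) else 0

/-- `f` is `p`-harmonic: `Δ_p f = 0` everywhere. -/
def IsPHarmonic {V : Type*} (G : SimpleGraph V) (p : ℝ) (f : V → ℝ) : Prop :=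
  ∀ v, pLaplacian G p f v = 0

/-- `G` is locally finite. -/
def LocFin {V : Type*} (G : SimpleGraph V) : Prop := ∀ v, (G.neighborSet v).Finite

/-- `G` has uniformly bounded vertex degrees. -/
def BddDeg {V : Type*} (G : SimpleGraph V) : Prop := ∃ D : ℕ, ∀ v, (G.neighborSet v).ncard ≤ D

/-- A quasi-sphere packing of `G` in `ℝ^d` with constant `C`. -/
def IsQuasiSpherePacking {V : Type*} (G : SimpleGraph V) (d : ℕ) (C : ℝ)
    (P : V → Set (EuclideanSpace ℝ (Fin d))) : Prop :=
  (∀ v, IsCompact (P v)) ∧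
  (∃ (z : V → EuclideanSpace ℝ (Fin d)) (r : V → ℝ),
    ∀ v, 0 < r v ∧ closedBall (z v) (r v) ⊆ P v ∧ P v ⊆ closedBall (z v) (C * r v)) ∧
  (Pairwise fun u v => Disjoint (interior (P u)) (interior (P v))) ∧
  (∀ u v, u ≠ v → ((P u ∩ P v).Nonempty ↔ G.Adj u v))

/-- `G` is quasi-sphere packable in `ℝ^d`. -/
def QuasiSpherePackable {V : Type*} (G : SimpleGraph V) (d : ℕ) : Prop :=
  ∃ C : ℝ, 1 ≤ C ∧ ∃ P : V → Set (EuclideanSpace ℝ (Fin d)), IsQuasiSpherePacking G d C P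

/-- The `m`-length of a finite walk: the sum of `m` over its edges. -/
noncomputable def walkLength {V : Type*} {G : SimpleGraph V} (m : Sym2 V → ℝ) {u v : V}
    (w : G.Walk u v) : ℝ :=
  (w.edges.map m).sum

/-- The distance `d_m(u,v)`: the infimum of `m`-lengths of walks joining `u` and `v`. -/
noncomputable def graphDist {V : Type*} (G : SimpleGraph V) (m : Sym2 V → ℝ) (u v : V) : ℝ :=
  sInf {L : ℝ | ∃ w : G.Walk u v, walkLength m w = L}

/-- `m` is an `L^p` metric on `G`: positive on edges, with `Σ_e m(e)^p < ∞`. -/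
def IsLpMetric {V : Type*} (G : SimpleGraph V) (p : ℝ) (m : Sym2 V → ℝ) : Prop :=
  (∀ e ∈ G.edgeSet, 0 < m e) ∧ Summable fun e : G.edgeSet => m (e : Sym2 V) ^ p

/-- `γ : ℕ → V` is a half-infinite (self-avoiding) path in `G`. -/
def IsInfPath {V : Type*} (G : SimpleGraph V) (γ : ℕ → V) : Prop :=
  (∀ n, G.Adj (γ n) (γ (n + 1))) ∧ Function.Injective γ

/-- The `m`-length of an infinite path. -/
noncomputable def pathLength {V : Type*} (m : Sym2 V → ℝ) (γ : ℕ → V) : ℝ≥0∞ :=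
  ∑' n, ENNReal.ofReal (m s(γ n, γ (n + 1)))

/-- A family of infinite paths is `p`-null if some `L^p` metric gives all of them
infinite length. -/
def IsPNull {V : Type*} (G : SimpleGraph V) (p : ℝ) (Γ : Set (ℕ → V)) : Prop :=
  ∃ m : Sym2 V → ℝ, IsLpMetric G p m ∧ ∀ γ ∈ Γ, pathLength m γ = ⊤

/-- `x` is a `d_m`-Cauchy sequence of vertices. -/
def CauchyIn {V : Type*} (G : SimpleGraph V) (m : Sym2 V → ℝ) (x : ℕ → V) : Prop :=
  ∀ ε : ℝ, 0 < ε → ∃ N, ∀ j ≥ N, ∀ k ≥ N, graphDist G m (x j) (x k) < ε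

/-- `x` converges to a vertex of `G` in the metric `d_m`. -/
def ConvergesToVertex {V : Type*} (G : SimpleGraph V) (m : Sym2 V → ℝ) (x : ℕ → V) : Prop :=
  ∃ v : V, Tendsto (fun n => graphDist G m (x n) v) atTop (𝓝 0)

/-- `m` is a `p`-resolving metric: it is `L^p`, and for every boundary point of the
`d_m`-completion (represented by a Cauchy sequence of vertices not converging to any
vertex), the family of infinite paths converging to that boundary point is `p`-null. -/
def IsResolving {V : Type*} (G : SimpleGraph V) (p : ℝ) (m : Sym2 V → ℝ) : Prop :=
  IsLpMetric G p m ∧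
  ∀ x : ℕ → V, CauchyIn G m x → ¬ ConvergesToVertex G m x →
    IsPNull G p
      {γ | IsInfPath G γ ∧ Tendsto (fun n => graphDist G m (γ n) (x n)) atTop (𝓝 0)}

/-- `G` is `p`-resolvable. -/
def Resolvable {V : Type*} (G : SimpleGraph V) (p : ℝ) : Prop :=
  ∃ m : Sym2 V → ℝ, IsResolving G p m

/-- `|df(e)|` for an unordered edge. -/
noncomputable def edgeAbsDiff {V : Type*} (f : V → ℝ) : Sym2 V → ℝ :=
  Sym2.lift ⟨fun u v => |f u - f v|, fun u v => abs_sub_comm (f u) (f v)⟩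

/-- The graph on `ℤ^n`, two lattice points adjacent iff their `ℓ¹` distance is `1`. -/
def latticeGraph (n : ℕ) : SimpleGraph (Fin n → ℤ) where
  Adj x y := (∑ i, |x i - y i|) = 1
  symm := by
    constructor
    intro x y h
    rw [← h]
    exact Finset.sum_congr rfl fun i _ => abs_sub_comm _ _
  loopless := by
    constructor
    intro x h
    simp at h

/-- The graph on `ℤ` where `n` is adjacent to `n ± 1`. -/
def zGraph : SimpleGraph ℤ where
  Adj a b := a = b + 1 ∨ b = a + 1
  symm := ⟨fun a b h => h.symm⟩
  loopless := ⟨fun a h => by rcases h with h | h <;> omega⟩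


private lemma rpow_sub_one_mul' (q : ℝ) (hq : q ≠ 0) (x : ℝ) (hx : 0 ≤ x) :
    x ^ (q - 1) * x = x ^ q := by
  rcases hx.eq_or_lt with h | h
  · rw [← h]; simp [Real.zero_rpow hq]
  · nth_rewrite 2 [← Real.rpow_one x]
    rw [← Real.rpow_add h, sub_add_cancel]

private lemma key_sq (p : ℝ) (hp : 1 < p) (a : ℝ) :
    |a| ^ (p - 2) * (a * a) = |a| ^ p := by
  have hp0 : p ≠ 0 := by linarith
  have hp1 : p - 1 ≠ 0 := sub_ne_zero.mpr (by linarith)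
  rcases eq_or_ne a 0 with rfl | ha
  · simp [Real.zero_rpow hp0]
  · have h1 : |a| ^ (p - 2) * |a| = |a| ^ (p - 1) := by
      have h := rpow_sub_one_mul' (p - 1) hp1 |a| (abs_nonneg a)
      rw [show p - 1 - 1 = p - 2 by ring] at h; exact h
    have h2 : |a| ^ (p - 1) * |a| = |a| ^ p := rpow_sub_one_mul' p hp0 |a| (abs_nonneg a)
    calc |a| ^ (p - 2) * (a * a) = |a| ^ (p - 2) * (|a| * |a|) := by rw [abs_mul_abs_self]
      _ = |a| ^ p := by rw [← mul_assoc, h1, h2]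

private lemma key_abs (p : ℝ) (hp : 1 < p) (a b : ℝ) :
    |(|a| ^ (p - 2) * a * b)| = |a| ^ (p - 1) * |b| := by
  have hp1 : p - 1 ≠ 0 := sub_ne_zero.mpr (by linarith)
  rw [abs_mul, abs_mul, abs_of_nonneg (Real.rpow_nonneg (abs_nonneg a) _)]
  congr 1
  have h := rpow_sub_one_mul' (p - 1) hp1 |a| (abs_nonneg a)
  rw [show p - 1 - 1 = p - 2 by ring] at h; exact h

private lemma key_bound (p : ℝ) (hp : 1 < p) (a b : ℝ) :
    |a| ^ (p - 1) * |b| ≤ |a| ^ p + |b| ^ p := by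
  have hp0 : p ≠ 0 := by linarith
  rcases le_total |a| |b| with h | h
  · calc |a| ^ (p - 1) * |b| ≤ |b| ^ (p - 1) * |b| := by
          exact mul_le_mul_of_nonneg_right
            (Real.rpow_le_rpow (abs_nonneg a) h (by linarith)) (abs_nonneg b)
      _ = |b| ^ p := rpow_sub_one_mul' p hp0 |b| (abs_nonneg b)
      _ ≤ _ := le_add_of_nonneg_left (Real.rpow_nonneg (abs_nonneg a) p)
  · calc |a| ^ (p - 1) * |b| ≤ |a| ^ (p - 1) * |a| :=
          mul_le_mul_of_nonneg_left h (Real.rpow_nonneg (abs_nonneg a) _)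
      _ = |a| ^ p := rpow_sub_one_mul' p hp0 |a| (abs_nonneg a)
      _ ≤ _ := le_add_of_nonneg_right (Real.rpow_nonneg (abs_nonneg b) p)

set_option maxHeartbeats 1600000 in
/-- For `f ∈ ℓ^p` with `D_p(f) < ∞` and `Δ_p f ∈ ℓ^{p'}`,
`⟨f, Δ_p f⟩ = -D_p(f)`. -/
theorem inner_pLaplacian_self {V : Type*} (p : ℝ) (hp : 1 < p) (G : SimpleGraph V)
    (hconn : G.Connected) (hlf : LocFin G) (hbd : BddDeg G) (f : V → ℝ)
    (hf : Summable fun v => |f v| ^ p) (hD : DirichletSummable G p f)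
    (hΔ : Summable fun v => |pLaplacian G p f v| ^ (p / (p - 1))) :
    (∑' v, f v * pLaplacian G p f v) = - dirichletEnergy G p f := by
  classical
  set A := {q : V × V // G.Adj q.1 q.2} with hA
  set g : A → ℝ := fun q => |f q.1.1 - f q.1.2| ^ (p - 2) * (f q.1.1 - f q.1.2) * f q.1.2 with hg
  obtain ⟨D, hDdeg⟩ := hbd
  -- summability of |f v|^p over adjacent pairs
  have hB : Summable fun q : A => |f q.1.2| ^ p := by
    let e : (Σ v : V, G.neighborSet v) ≃ A :=
      { toFun := fun x => ⟨(x.2.1, x.1), x.2.2.symm⟩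
        invFun := fun q => ⟨q.1.2, ⟨q.1.1, q.2.symm⟩⟩
        left_inv := fun x => rfl
        right_inv := fun q => rfl }
    rw [← e.summable_iff]
    show Summable fun x : Σ v : V, G.neighborSet v => |f x.1| ^ p
    have hnn : ∀ x : Σ v : V, G.neighborSet v,
        (0:ℝ) ≤ |f x.1| ^ p := fun x => Real.rpow_nonneg (abs_nonneg _) _
    refine (summable_sigma_of_nonneg hnn).mpr ⟨?_, ?_⟩
    · intro v
      haveI : Finite (G.neighborSet v) := (hlf v).to_subtype
      exact Summable.of_finite
    · apply Summable.of_nonneg_of_le (fun v => ?_) (fun v => ?_) (hf.mul_left (D:ℝ))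
      · exact tsum_nonneg fun _ => Real.rpow_nonneg (abs_nonneg _) _
      · haveI : Finite (G.neighborSet v) := (hlf v).to_subtype
        show (∑' _ : G.neighborSet v, |f v| ^ p) ≤ (D : ℝ) * |f v| ^ p
        rw [tsum_const, Nat.card_coe_set_eq, nsmul_eq_mul]
        have h1 : ((G.neighborSet v).ncard : ℝ) ≤ (D:ℝ) := by exact_mod_cast hDdeg v
        exact mul_le_mul_of_nonneg_right h1 (Real.rpow_nonneg (abs_nonneg _) _)
  -- summability over adjacent pairs of |df|^p
  have hDsum : Summable fun q : A => |f q.1.1 - f q.1.2| ^ p := hD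
  -- summability of g
  have hgsum : Summable g := by
    rw [← summable_abs_iff]
    apply Summable.of_nonneg_of_le (fun q => abs_nonneg _) (fun q => ?_) (hDsum.add hB)
    rw [hg]
    dsimp only
    rw [key_abs p hp]
    exact key_bound p hp _ _
  -- the double-indexed function
  set T : V × V → ℝ := fun q =>
    if G.Adj q.1 q.2 then |f q.1 - f q.2| ^ (p - 2) * (f q.1 - f q.2) * f q.2 else 0 with hT
  have hTind : T = Set.indicator {q : V × V | G.Adj q.1 q.2}
      (fun q => |f q.1 - f q.2| ^ (p - 2) * (f q.1 - f q.2) * f q.2) := by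
    funext q; simp [hT, Set.indicator_apply]
  have hTsum : Summable T := by
    rw [hTind, ← summable_subtype_iff_indicator]
    exact hgsum
  -- step 1: rewrite the inner product as an iterated sum
  have step1 : (∑' v, f v * pLaplacian G p f v) = ∑' v, ∑' u, T (u, v) := by
    refine tsum_congr fun v => ?_
    rw [pLaplacian, ← tsum_mul_left]
    refine tsum_congr fun u => ?_
    simp only [hT, mul_ite, mul_zero]
    split_ifs with h
    · ring
    · rfl
  -- step 2: iterated sum equals sum over the product
  have hTswap : Summable fun q : V × V => T q.swap := by
    exact ((Equiv.prodComm V V).summable_iff).mpr hTsum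
  have step2 : (∑' v, ∑' u, T (u, v)) = ∑' q : V × V, T q := by
    rw [← (Equiv.prodComm V V).tsum_eq T]
    exact (Summable.tsum_prod' hTswap hTswap.prod_factor).symm
  -- step 3: sum over product equals sum over adjacent pairs
  have step3 : (∑' q : V × V, T q) = ∑' q : A, g q := by
    rw [← tsum_subtype_eq_of_support_subset (s := {q : V × V | G.Adj q.1 q.2})
      (fun q hq => by by_contra h; exact hq (if_neg h))]
    exact tsum_congr fun q => if_pos q.2
  -- symmetrization
  let σ : A ≃ A :=
    { toFun := fun q => ⟨(q.1.2, q.1.1), q.2.symm⟩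
      invFun := fun q => ⟨(q.1.2, q.1.1), q.2.symm⟩
      left_inv := fun q => rfl
      right_inv := fun q => rfl }
  have hσsum : Summable (fun q => g (σ q)) := (σ.summable_iff).mpr hgsum
  have hsym : (∑' q : A, g q) = ∑' q : A, g (σ q) := (σ.tsum_eq g).symm
  have hpair : ∀ q : A, g q + g (σ q) = -(|f q.1.1 - f q.1.2| ^ p) := by
    intro q
    have h := key_sq p hp (f q.1.1 - f q.1.2)
    have habs : |f q.1.2 - f q.1.1| = |f q.1.1 - f q.1.2| := abs_sub_comm _ _
    simp only [g, σ, Equiv.coe_fn_mk]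
    rw [habs]
    linear_combination -h
  have hsum2 : (∑' q : A, g q) + (∑' q : A, g (σ q)) = -(2 * dirichletEnergy G p f) := by
    rw [← Summable.tsum_add hgsum hσsum]
    have : (∑' q : A, (g q + g (σ q))) = ∑' q : A, -(|f q.1.1 - f q.1.2| ^ p) :=
      tsum_congr hpair
    rw [this, tsum_neg, dirichletEnergy]
    ring
  rw [step1, step2, step3]
  rw [← hsym] at hsum2
  linarith
end

section
/- Let p > 1 and let G = (V,E) be a connected, locally finite simple graph with uniformly bounded vertex degrees. If f : V → ℝ is p-harmonic, D_p(f) < ∞, and f ∈ ℓ^p(V), then f is constant. -/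
open Filter Topology Metric
open scoped ENNReal Classical

section PharmonicAux

variable {V : Type*}

/-- Equivalence between ordered adjacent pairs and the sigma type of neighbor sets. -/
def adjSigmaEquiv (G : SimpleGraph V) :
    {q : V × V // G.Adj q.1 q.2} ≃ Σ v : V, G.neighborSet v where
  toFun q := ⟨q.1.2, ⟨q.1.1, q.2.symm⟩⟩
  invFun s := ⟨(s.2.1, s.1), s.2.2.symm⟩
  left_inv q := rfl
  right_inv s := rfl

/-- The swap involution on ordered adjacent pairs. -/
def adjSwapEquiv (G : SimpleGraph V) :
    {q : V × V // G.Adj q.1 q.2} ≃ {q : V × V // G.Adj q.1 q.2} where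
  toFun q := ⟨q.1.swap, q.2.symm⟩
  invFun q := ⟨q.1.swap, q.2.symm⟩
  left_inv q := rfl
  right_inv q := rfl

/-- The "gradient" term `|f u - f v| ^ (p-2) * (f u - f v)` on an ordered adjacent pair. -/
noncomputable def gA (G : SimpleGraph V) (p : ℝ) (f : V → ℝ)
    (s : {q : V × V // G.Adj q.1 q.2}) : ℝ :=
  |f s.1.1 - f s.1.2| ^ (p - 2) * (f s.1.1 - f s.1.2)

end PharmonicAux

theorem pharmonic_lp_constant_aux {V : Type*} (p : ℝ) (hp : 1 < p) (G : SimpleGraph V)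
    (hconn : G.Connected) (hlf : LocFin G) (hbd : BddDeg G) (f : V → ℝ)
    (hharm : IsPHarmonic G p f) (hD : DirichletSummable G p f)
    (hf : Summable fun v => |f v| ^ p) :
    ∃ c : ℝ, ∀ v, f v = c := by
  have hp0 : p ≠ 0 := by linarith
  have hp1 : p - 1 ≠ 0 := by intro h; linarith [sub_eq_zero.1 h]
  have hpq : p.HolderConjugate (p / (p - 1)) := Real.HolderConjugate.conjExponent hp
  have hD' : Summable fun s : {q : V × V // G.Adj q.1 q.2} => |f s.1.1 - f s.1.2| ^ p := hD
  -- pointwise absolute value of the gradient term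
  have habs : ∀ x : ℝ, |(|x| ^ (p - 2) * x)| = |x| ^ (p - 1) := by
    intro x
    rcases eq_or_ne x 0 with h | h
    · simp [h, Real.zero_rpow hp1]
    · have ha : 0 < |x| := abs_pos.2 h
      have h2 : |x| ^ (p - 2) * |x| = |x| ^ (p - 2 + 1) := by
        rw [Real.rpow_add ha, Real.rpow_one]
      rw [abs_mul, abs_of_nonneg (Real.rpow_nonneg (abs_nonneg x) _), h2]
      congr 1
      ring
  -- pointwise product identity
  have hmul : ∀ x : ℝ, x * (|x| ^ (p - 2) * x) = |x| ^ p := by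
    intro x
    rcases eq_or_ne x 0 with h | h
    · simp [h, Real.zero_rpow hp0]
    · have ha : 0 < |x| := abs_pos.2 h
      have hx2 : x * x = |x| ^ (2 : ℝ) := by rw [Real.rpow_two, sq_abs, sq]
      calc x * (|x| ^ (p - 2) * x) = |x| ^ (p - 2) * (x * x) := by ring
        _ = |x| ^ (p - 2) * |x| ^ (2 : ℝ) := by rw [hx2]
        _ = |x| ^ (p - 2 + 2) := (Real.rpow_add ha _ _).symm
        _ = |x| ^ p := by congr 1; ring
  -- summability of |f v|^p over adjacent pairs (second coordinate)
  have h1 : Summable fun s : {q : V × V // G.Adj q.1 q.2} => |f s.1.2| ^ p := by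
    rw [← Equiv.summable_iff (adjSigmaEquiv G).symm]
    have hcomp : ((fun s : {q : V × V // G.Adj q.1 q.2} => |f s.1.2| ^ p) ∘
        (adjSigmaEquiv G).symm) = fun x : Σ v : V, G.neighborSet v => |f x.1| ^ p := rfl
    rw [hcomp]
    obtain ⟨D, hDle⟩ := hbd
    rw [summable_sigma_of_nonneg (fun x => Real.rpow_nonneg (abs_nonneg _) _)]
    constructor
    · intro v
      haveI := (hlf v).to_subtype
      exact Summable.of_finite
    · apply Summable.of_nonneg_of_le
        (fun v => tsum_nonneg fun _ => Real.rpow_nonneg (abs_nonneg _) _)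
        (fun v => ?_) (hf.mul_left (D : ℝ))
      haveI := (hlf v).fintype
      rw [tsum_fintype]
      show (∑ _b : (G.neighborSet v), |f v| ^ p) ≤ (D : ℝ) * |f v| ^ p
      rw [Finset.sum_const, nsmul_eq_mul]
      have hcard : ((Finset.univ : Finset (G.neighborSet v)).card : ℝ) ≤ (D : ℝ) := by
        have : (Finset.univ : Finset (G.neighborSet v)).card = (G.neighborSet v).ncard := by
          rw [Finset.card_univ, ← Nat.card_eq_fintype_card, Nat.card_coe_set_eq]
        rw [this]
        exact_mod_cast hDle v
      exact mul_le_mul_of_nonneg_right hcard (Real.rpow_nonneg (abs_nonneg _) _)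
  have h1' : Summable fun s : {q : V × V // G.Adj q.1 q.2} => |f s.1.1| ^ p := by
    rw [← Equiv.summable_iff (adjSwapEquiv G)]
    exact h1
  -- L^p-boundedness of products via Young's inequality
  have young : ∀ (a : ℝ) (s : {q : V × V // G.Adj q.1 q.2}),
      |a| * |gA G p f s| ≤ |a| ^ p / p + |f s.1.1 - f s.1.2| ^ p / (p / (p - 1)) := by
    intro a s
    rw [gA, habs]
    calc |a| * |f s.1.1 - f s.1.2| ^ (p - 1)
        ≤ |a| ^ p / p + (|f s.1.1 - f s.1.2| ^ (p - 1)) ^ (p / (p - 1)) / (p / (p - 1)) :=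
          Real.young_inequality_of_nonneg (abs_nonneg _)
            (Real.rpow_nonneg (abs_nonneg _) _) hpq
      _ = |a| ^ p / p + |f s.1.1 - f s.1.2| ^ p / (p / (p - 1)) := by
          rw [← Real.rpow_mul (abs_nonneg _), hpq.sub_one_mul_conj]
  have h2 : Summable fun s : {q : V × V // G.Adj q.1 q.2} => f s.1.2 * gA G p f s := by
    apply Summable.of_abs
    apply Summable.of_nonneg_of_le (fun s => abs_nonneg _) (fun s => ?_)
      ((h1.div_const p).add (hD'.div_const (p / (p - 1))))
    rw [abs_mul]
    exact young _ s
  have h2' : Summable fun s : {q : V × V // G.Adj q.1 q.2} => f s.1.1 * gA G p f s := by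
    apply Summable.of_abs
    apply Summable.of_nonneg_of_le (fun s => abs_nonneg _) (fun s => ?_)
      ((h1'.div_const p).add (hD'.div_const (p / (p - 1))))
    rw [abs_mul]
    exact young _ s
  -- the sum of f(v) * gA over pairs vanishes, by p-harmonicity
  have hA : ∑' s : {q : V × V // G.Adj q.1 q.2}, f s.1.2 * gA G p f s = 0 := by
    rw [← Equiv.tsum_eq (adjSigmaEquiv G).symm]
    have hS0 : Summable ((fun s : {q : V × V // G.Adj q.1 q.2} => f s.1.2 * gA G p f s) ∘
        (adjSigmaEquiv G).symm) := ((adjSigmaEquiv G).symm.summable_iff).2 h2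
    have hS : Summable fun x : Σ v : V, G.neighborSet v =>
        (fun s : {q : V × V // G.Adj q.1 q.2} => f s.1.2 * gA G p f s)
          ((adjSigmaEquiv G).symm x) := hS0
    rw [Summable.tsum_sigma hS]
    have inner : ∀ v : V, (∑' u : G.neighborSet v,
        f v * (|f (u : V) - f v| ^ (p - 2) * (f (u : V) - f v))) = 0 := by
      intro v
      rw [tsum_mul_left]
      have hpl : (∑' u : G.neighborSet v,
          |f (u : V) - f v| ^ (p - 2) * (f (u : V) - f v)) = pLaplacian G p f v := by
        rw [pLaplacian, tsum_subtype (G.neighborSet v) (fun u => |f u - f v| ^ (p - 2) * (f u - f v))]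
        apply tsum_congr
        intro u
        rw [Set.indicator_apply]
        by_cases h : G.Adj u v
        · rw [if_pos (by rwa [SimpleGraph.mem_neighborSet, G.adj_comm]), if_pos h]
        · rw [if_neg (by rwa [SimpleGraph.mem_neighborSet, G.adj_comm]), if_neg h]
      rw [hpl, hharm v, mul_zero]
    exact (tsum_congr inner).trans tsum_zero
  have hB : ∑' s : {q : V × V // G.Adj q.1 q.2}, f s.1.1 * gA G p f s = 0 := by
    rw [← Equiv.tsum_eq (adjSwapEquiv G)]
    have hneg : ∀ s : {q : V × V // G.Adj q.1 q.2},
        (fun s : {q : V × V // G.Adj q.1 q.2} => f s.1.1 * gA G p f s) (adjSwapEquiv G s)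
          = -(f s.1.2 * gA G p f s) := by
      intro s
      show f s.1.2 * (|f s.1.2 - f s.1.1| ^ (p - 2) * (f s.1.2 - f s.1.1))
        = -(f s.1.2 * (|f s.1.1 - f s.1.2| ^ (p - 2) * (f s.1.1 - f s.1.2)))
      rw [abs_sub_comm]
      ring
    rw [tsum_congr hneg, tsum_neg, hA, neg_zero]
  -- hence the Dirichlet energy vanishes
  have hzero : ∑' s : {q : V × V // G.Adj q.1 q.2}, |f s.1.1 - f s.1.2| ^ p = 0 := by
    have hpt : ∀ s : {q : V × V // G.Adj q.1 q.2},
        |f s.1.1 - f s.1.2| ^ p = f s.1.1 * gA G p f s - f s.1.2 * gA G p f s := by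
      intro s
      rw [← hmul (f s.1.1 - f s.1.2), gA]
      ring
    rw [tsum_congr hpt, Summable.tsum_sub h2' h2, hA, hB, sub_zero]
  -- so f is constant on edges
  have key : ∀ ⦃u v : V⦄, G.Adj u v → f u = f v := by
    intro u v h
    have hle := Summable.le_tsum hD' ⟨(u, v), h⟩ (fun s _ => Real.rpow_nonneg (abs_nonneg _) _)
    rw [hzero] at hle
    have h0 : |f u - f v| ^ p = 0 :=
      le_antisymm hle (Real.rpow_nonneg (abs_nonneg _) _)
    exact sub_eq_zero.1 (abs_eq_zero.1 ((Real.rpow_eq_zero (abs_nonneg _) hp0).1 h0))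
  -- conclude
  have := hconn.nonempty
  obtain ⟨v₀⟩ := this
  refine ⟨f v₀, fun v => ?_⟩
  have hwalk : ∀ {a b : V} (w : G.Walk a b), f a = f b := by
    intro a b w
    induction w with
    | nil => rfl
    | cons h _ ih => exact (key h).trans ih
  exact (hconn.preconnected v v₀).elim fun w => hwalk w

/-- A `p`-harmonic, `p`-Dirichlet function in `ℓ^p(V)` is constant. -/
theorem pharmonic_lp_constant {V : Type*} (p : ℝ) (hp : 1 < p) (G : SimpleGraph V)
    (hconn : G.Connected) (hlf : LocFin G) (hbd : BddDeg G) (f : V → ℝ)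
    (hharm : IsPHarmonic G p f) (hD : DirichletSummable G p f)
    (hf : Summable fun v => |f v| ^ p) :
    ∃ c : ℝ, ∀ v, f v = c :=
  pharmonic_lp_constant_aux p hp G hconn hlf hbd f hharm hD hf
end

section
/- Let p > 1 and let G = (V,E) be a connected, locally finite simple graph with uniformly bounded vertex degrees. Let f, g : V → ℝ satisfy D_p(f) < ∞, g ∈ ℓ^p(V), and Δ_p f ∈ ℓ^{p'}(V), where p' = p/(p−1). Then the function t ↦ D_p(f + t·g) is differentiable at t = 0 with derivative equal to −p·⟨g, Δ_p f⟩. -/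
open Filter Topology Metric
open scoped ENNReal Classical

private lemma young_summable {ι : Type*} {p : ℝ} (hp : 1 < p) {A B : ι → ℝ}
    (hA : ∀ i, 0 ≤ A i) (hB : ∀ i, 0 ≤ B i)
    (hAp : Summable fun i => A i ^ p) (hBp : Summable fun i => B i ^ p) :
    Summable fun i => A i ^ (p - 1) * B i := by
  have hq : (p / (p - 1)).HolderConjugate p := (Real.HolderConjugate.conjExponent hp).symm
  refine Summable.of_nonneg_of_le
    (fun i => mul_nonneg (Real.rpow_nonneg (hA i) _) (hB i)) (fun i => ?_)
    ((hAp.div_const (p / (p - 1))).add (hBp.div_const p))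
  have h1 : (A i ^ (p - 1)) ^ (p / (p - 1)) = A i ^ p := by
    rw [← Real.rpow_mul (hA i)]
    have hne : p - 1 ≠ 0 := by linarith
    congr 1
    field_simp
  calc A i ^ (p - 1) * B i
      ≤ (A i ^ (p - 1)) ^ (p / (p - 1)) / (p / (p - 1)) + B i ^ p / p :=
        Real.young_inequality_of_nonneg (Real.rpow_nonneg (hA i) _) (hB i) hq
    _ = A i ^ p / (p / (p - 1)) + B i ^ p / p := by rw [h1]

private lemma add_rpow_summable {ι : Type*} {p : ℝ} (hp : 1 < p) {A B : ι → ℝ}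
    (hA : ∀ i, 0 ≤ A i) (hB : ∀ i, 0 ≤ B i)
    (hAp : Summable fun i => A i ^ p) (hBp : Summable fun i => B i ^ p) :
    Summable fun i => (A i + B i) ^ p := by
  have hp0 : (0:ℝ) ≤ p := by linarith
  refine Summable.of_nonneg_of_le (fun i => Real.rpow_nonneg (add_nonneg (hA i) (hB i)) _)
    (fun i => ?_) (((hAp.add hBp).mul_left ((2:ℝ) ^ p)))
  have h1 : A i + B i ≤ 2 * max (A i) (B i) := by
    rcases le_total (A i) (B i) with h | h
    · rw [max_eq_right h]; linarith
    · rw [max_eq_left h]; linarith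
  calc (A i + B i) ^ p ≤ (2 * max (A i) (B i)) ^ p :=
        Real.rpow_le_rpow (add_nonneg (hA i) (hB i)) h1 hp0
    _ = 2 ^ p * max (A i) (B i) ^ p := Real.mul_rpow (by norm_num) (le_max_of_le_left (hA i))
    _ ≤ 2 ^ p * (A i ^ p + B i ^ p) := by
        refine mul_le_mul_of_nonneg_left ?_ (by positivity)
        rcases le_total (A i) (B i) with h | h
        · rw [max_eq_right h]; have := Real.rpow_nonneg (hA i) p; linarith
        · rw [max_eq_left h]; have := Real.rpow_nonneg (hB i) p; linarith

/-- Swap equivalence on the type of oriented edges. -/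
private def adjSwap {V : Type*} (G : SimpleGraph V) :
    {q : V × V // G.Adj q.1 q.2} ≃ {q : V × V // G.Adj q.1 q.2} where
  toFun q := ⟨(q.1.2, q.1.1), q.2.symm⟩
  invFun q := ⟨(q.1.2, q.1.1), q.2.symm⟩
  left_inv q := by ext <;> rfl
  right_inv q := by ext <;> rfl

private lemma summable_fst {V : Type*} {G : SimpleGraph V} (hlf : ∀ v, (G.neighborSet v).Finite)
    (hbd : ∃ D : ℕ, ∀ v, (G.neighborSet v).ncard ≤ D) {c : V → ℝ}
    (hc : ∀ v, 0 ≤ c v) (hsum : Summable c) :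
    Summable fun q : {q : V × V // G.Adj q.1 q.2} => c q.1.1 := by
  obtain ⟨D, hD⟩ := hbd
  haveI : ∀ v : V, Finite {u : V // G.Adj v u} := fun v => (hlf v).to_subtype
  let e : {q : V × V // G.Adj q.1 q.2} ≃ Σ v : V, {u : V // G.Adj v u} :=
    { toFun := fun q => ⟨q.1.1, q.1.2, q.2⟩
      invFun := fun x => ⟨(x.1, x.2.1), x.2.2⟩
      left_inv := fun q => by ext <;> rfl
      right_inv := fun x => rfl }
  have key : Summable fun x : Σ v : V, {u : V // G.Adj v u} => c x.1 := by
    rw [summable_sigma_of_nonneg (fun x => hc x.1)]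
    constructor
    · exact fun v => Summable.of_finite
    · refine Summable.of_nonneg_of_le (fun v => tsum_nonneg fun _ => hc v) (fun v => ?_)
        (hsum.mul_left (D : ℝ))
      have h1 : ∑' _ : {u : V // G.Adj v u}, c v = Nat.card {u : V // G.Adj v u} • c v := by
        rw [tsum_const]
      have h2 : Nat.card {u : V // G.Adj v u} = (G.neighborSet v).ncard :=
        Nat.card_coe_set_eq (G.neighborSet v)
      rw [h1, h2, nsmul_eq_mul]
      exact mul_le_mul_of_nonneg_right (by exact_mod_cast hD v) (hc v)
  have := (Equiv.summable_iff e).2 key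
  exact this

private lemma summable_snd {V : Type*} {G : SimpleGraph V} (hlf : ∀ v, (G.neighborSet v).Finite)
    (hbd : ∃ D : ℕ, ∀ v, (G.neighborSet v).ncard ≤ D) {c : V → ℝ}
    (hc : ∀ v, 0 ≤ c v) (hsum : Summable c) :
    Summable fun q : {q : V × V // G.Adj q.1 q.2} => c q.1.2 := by
  have := (Equiv.summable_iff (adjSwap G)).2 (summable_fst hlf hbd hc hsum)
  exact this

private lemma abs_rpow_mul_self_le {p x : ℝ} (hp : 1 < p) :
    |(|x| ^ (p - 2)) * x| ≤ |x| ^ (p - 1) := by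
  rcases eq_or_ne x 0 with h | h
  · simp [h, Real.rpow_nonneg]
  · rw [abs_mul, Real.abs_rpow_of_nonneg (abs_nonneg x), abs_abs,
      show p - 1 = (p - 2) + 1 by ring, Real.rpow_add_one (abs_ne_zero.2 h)]

private lemma hasDerivAt_tsum_abs_rpow {ι : Type*} {p : ℝ} (hp : 1 < p) {a b : ι → ℝ}
    (hA : Summable fun i => |a i| ^ p) (hB : Summable fun i => |b i| ^ p) :
    HasDerivAt (fun t : ℝ => ∑' i, |a i + t * b i| ^ p)
      (∑' i, p * |a i| ^ (p - 2) * a i * b i) 0 := by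
  have hp0 : (0:ℝ) < p := by linarith
  have hp1 : (0:ℝ) ≤ p - 1 := by linarith
  have hAB : Summable fun i => (|a i| + |b i|) ^ p :=
    add_rpow_summable hp (fun i => abs_nonneg _) (fun i => abs_nonneg _) hA hB
  have hu : Summable fun i => p * ((|a i| + |b i|) ^ (p - 1) * |b i|) :=
    (young_summable hp (fun i => add_nonneg (abs_nonneg _) (abs_nonneg _))
      (fun i => abs_nonneg _) hAB hB).mul_left p
  have hderiv : ∀ (i : ι) (t : ℝ),
      HasDerivAt (fun t : ℝ => |a i + t * b i| ^ p)
        (p * |a i + t * b i| ^ (p - 2) * (a i + t * b i) * b i) t := by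
    intro i t
    have h1 : HasDerivAt (fun t : ℝ => a i + t * b i) (b i) t := by
      simpa using (hasDerivAt_mul_const (b i)).const_add (a i)
    exact (hasDerivAt_abs_rpow (a i + t * b i) hp).comp t h1
  have hbound : ∀ (i : ι) (t : ℝ), t ∈ Set.Ioo (-1:ℝ) 1 →
      ‖p * |a i + t * b i| ^ (p - 2) * (a i + t * b i) * b i‖ ≤
        p * ((|a i| + |b i|) ^ (p - 1) * |b i|) := by
    intro i t ht
    have h2 : |t| ≤ 1 := abs_le.2 ⟨ht.1.le, ht.2.le⟩
    have habs : |a i + t * b i| ≤ |a i| + |b i| := by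
      calc |a i + t * b i| ≤ |a i| + |t * b i| := abs_add_le _ _
        _ = |a i| + |t| * |b i| := by rw [abs_mul]
        _ ≤ |a i| + 1 * |b i| := by nlinarith [abs_nonneg (b i)]
        _ = |a i| + |b i| := by ring
    have hC : (0:ℝ) ≤ |a i + t * b i| ^ (p - 2) := Real.rpow_nonneg (abs_nonneg _) _
    have key : |(|a i + t * b i| ^ (p - 2)) * (a i + t * b i)| ≤ (|a i| + |b i|) ^ (p - 1) :=
      le_trans (abs_rpow_mul_self_le hp) (Real.rpow_le_rpow (abs_nonneg _) habs hp1)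
    rw [abs_mul, abs_of_nonneg hC] at key
    rw [Real.norm_eq_abs]
    calc |p * |a i + t * b i| ^ (p - 2) * (a i + t * b i) * b i|
        = p * ((|a i + t * b i| ^ (p - 2) * |a i + t * b i|) * |b i|) := by
          rw [abs_mul, abs_mul, abs_mul, abs_of_nonneg hp0.le, abs_of_nonneg hC]; ring
      _ ≤ p * ((|a i| + |b i|) ^ (p - 1) * |b i|) :=
          mul_le_mul_of_nonneg_left (mul_le_mul_of_nonneg_right key (abs_nonneg _)) hp0.le
  have h0 : (0:ℝ) ∈ Set.Ioo (-1:ℝ) 1 := by norm_num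
  have hsum0 : Summable fun i => |a i + (0:ℝ) * b i| ^ p := by simpa using hA
  have hmain := hasDerivAt_tsum_of_isPreconnected hu isOpen_Ioo
    (convex_Ioo (-1:ℝ) 1).isPreconnected (fun i t _ => hderiv i t) hbound h0 hsum0 h0
  have hval : (∑' i, p * |a i| ^ (p - 2) * a i * b i)
      = ∑' i, p * |a i + (0:ℝ) * b i| ^ (p - 2) * (a i + (0:ℝ) * b i) * b i :=
    tsum_congr fun i => by rw [zero_mul, add_zero]
  rw [hval]
  exact hmain

private lemma tsum_pairing {V : Type*} {G : SimpleGraph V} {p : ℝ} (hp : 1 < p) (f g : V → ℝ)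
    (Summ1 : Summable fun q : {q : V × V // G.Adj q.1 q.2} =>
      |f q.1.1 - f q.1.2| ^ (p - 2) * (f q.1.1 - f q.1.2) * g q.1.1)
    (Summ2 : Summable fun q : {q : V × V // G.Adj q.1 q.2} =>
      |f q.1.1 - f q.1.2| ^ (p - 2) * (f q.1.1 - f q.1.2) * g q.1.2) :
    ∑' q : {q : V × V // G.Adj q.1 q.2},
        |f q.1.1 - f q.1.2| ^ (p - 2) * (f q.1.1 - f q.1.2) * (g q.1.1 - g q.1.2)
      = -2 * ∑' v, g v * pLaplacian G p f v := by
  set F : V × V → ℝ := fun x =>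
    if G.Adj x.1 x.2 then |f x.1 - f x.2| ^ (p - 2) * (f x.1 - f x.2) * g x.2 else 0 with hF
  have hsub : ∀ q : {q : V × V // G.Adj q.1 q.2},
      F q.1 = |f q.1.1 - f q.1.2| ^ (p - 2) * (f q.1.1 - f q.1.2) * g q.1.2 :=
    fun q => if_pos q.2
  -- T1 = -T2
  have hT1 : (∑' q : {q : V × V // G.Adj q.1 q.2},
        |f q.1.1 - f q.1.2| ^ (p - 2) * (f q.1.1 - f q.1.2) * g q.1.1)
      = - ∑' q : {q : V × V // G.Adj q.1 q.2},
        |f q.1.1 - f q.1.2| ^ (p - 2) * (f q.1.1 - f q.1.2) * g q.1.2 := by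
    rw [← Equiv.tsum_eq (adjSwap G) (fun q => |f q.1.1 - f q.1.2| ^ (p - 2) *
      (f q.1.1 - f q.1.2) * g q.1.1), ← tsum_neg]
    refine tsum_congr fun q => ?_
    show |f q.1.2 - f q.1.1| ^ (p - 2) * (f q.1.2 - f q.1.1) * g q.1.2
        = -(|f q.1.1 - f q.1.2| ^ (p - 2) * (f q.1.1 - f q.1.2) * g q.1.2)
    rw [abs_sub_comm]
    ring
  -- split
  have hsplit : (∑' q : {q : V × V // G.Adj q.1 q.2},
        |f q.1.1 - f q.1.2| ^ (p - 2) * (f q.1.1 - f q.1.2) * (g q.1.1 - g q.1.2))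
      = (∑' q : {q : V × V // G.Adj q.1 q.2},
          |f q.1.1 - f q.1.2| ^ (p - 2) * (f q.1.1 - f q.1.2) * g q.1.1)
        - ∑' q : {q : V × V // G.Adj q.1 q.2},
          |f q.1.1 - f q.1.2| ^ (p - 2) * (f q.1.1 - f q.1.2) * g q.1.2 := by
    rw [← Summable.tsum_sub Summ1 Summ2]
    exact tsum_congr fun q => by ring
  -- T2 = ∑' v, g v * Δ
  have hT2 : (∑' q : {q : V × V // G.Adj q.1 q.2},
        |f q.1.1 - f q.1.2| ^ (p - 2) * (f q.1.1 - f q.1.2) * g q.1.2)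
      = ∑' v, g v * pLaplacian G p f v := by
    have hFsupp : Function.support F ⊆ {x : V × V | G.Adj x.1 x.2} := by
      intro x hx
      by_contra h
      exact hx (if_neg h)
    have e1 : (∑' q : {q : V × V // G.Adj q.1 q.2},
          |f q.1.1 - f q.1.2| ^ (p - 2) * (f q.1.1 - f q.1.2) * g q.1.2)
        = ∑' x : V × V, F x := by
      rw [← tsum_subtype_eq_of_support_subset hFsupp]
      exact tsum_congr fun q => (hsub q).symm
    have hFsum : Summable F := by
      have h1 : Summable fun q : {q : V × V // G.Adj q.1 q.2} => F q.1 :=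
        Summ2.congr fun q => (hsub q).symm
      have h2 := (summable_subtype_iff_indicator
        (s := {x : V × V | G.Adj x.1 x.2}) (f := F)).mp h1
      have h3 : Set.indicator {x : V × V | G.Adj x.1 x.2} F = F := by
        funext x
        by_cases h : x ∈ {x : V × V | G.Adj x.1 x.2}
        · exact Set.indicator_of_mem h F
        · rw [Set.indicator_of_notMem h]
          exact (if_neg h).symm
      rwa [h3] at h2
    have hFsum' : Summable fun x : V × V => F (Prod.swap x) :=
      (Equiv.prodComm V V).summable_iff.mpr hFsum
    have e2 : (∑' x : V × V, F x) = ∑' x : V × V, F (Prod.swap x) :=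
      ((Equiv.prodComm V V).tsum_eq F).symm
    have e3 : (∑' x : V × V, F (Prod.swap x)) = ∑' v, ∑' u, F (Prod.swap (v, u)) :=
      Summable.tsum_prod' hFsum' fun v => hFsum'.prod_factor v
    have e4 : ∀ v, (∑' u, F (Prod.swap (v, u))) = g v * pLaplacian G p f v := by
      intro v
      have h5 : ∀ u, F (Prod.swap (v, u))
          = g v * (if G.Adj u v then |f u - f v| ^ (p - 2) * (f u - f v) else 0) := by
        intro u
        show F (u, v) = _
        by_cases h : G.Adj u v
        · rw [hF]
          simp only [if_pos h]
          ring
        · rw [hF]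
          simp only [if_neg h]
          ring
      rw [tsum_congr h5, tsum_mul_left]
      rfl
    rw [e1, e2, e3]
    exact tsum_congr e4
  rw [hsplit, hT1, hT2]
  ring

/-- `t ↦ D_p(f + t g)` is differentiable at `t = 0` with derivative
`-p ⟨g, Δ_p f⟩`. -/

theorem hasDerivAt_dirichletEnergy {V : Type*} (p : ℝ) (hp : 1 < p) (G : SimpleGraph V)
    (hconn : G.Connected) (hlf : LocFin G) (hbd : BddDeg G) (f g : V → ℝ)
    (hD : DirichletSummable G p f) (hg : Summable fun v => |g v| ^ p)
    (hΔ : Summable fun v => |pLaplacian G p f v| ^ (p / (p - 1))) :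
    HasDerivAt (fun t : ℝ => dirichletEnergy G p fun v => f v + t * g v)
      (-p * ∑' v, g v * pLaplacian G p f v) 0 := by
  have hp0 : (0:ℝ) < p := by linarith
  have hA : Summable fun q : {q : V × V // G.Adj q.1 q.2} => |f q.1.1 - f q.1.2| ^ p := hD
  have hgp : ∀ v, 0 ≤ |g v| ^ p := fun v => Real.rpow_nonneg (abs_nonneg _) _
  have hg1 : Summable fun q : {q : V × V // G.Adj q.1 q.2} => |g q.1.1| ^ p :=
    summable_fst hlf hbd hgp hg
  have hg2 : Summable fun q : {q : V × V // G.Adj q.1 q.2} => |g q.1.2| ^ p :=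
    summable_snd hlf hbd hgp hg
  have hB : Summable fun q : {q : V × V // G.Adj q.1 q.2} => |g q.1.1 - g q.1.2| ^ p := by
    refine Summable.of_nonneg_of_le (fun q => Real.rpow_nonneg (abs_nonneg _) _) (fun q => ?_)
      (add_rpow_summable hp (fun q => abs_nonneg (g q.1.1)) (fun q => abs_nonneg (g q.1.2))
        hg1 hg2)
    exact Real.rpow_le_rpow (abs_nonneg _) (abs_sub _ _) hp0.le
  -- summability of the two pairing series
  have habsbd : ∀ (q : {q : V × V // G.Adj q.1 q.2}) (c : ℝ),
      ‖|f q.1.1 - f q.1.2| ^ (p - 2) * (f q.1.1 - f q.1.2) * c‖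
        ≤ |f q.1.1 - f q.1.2| ^ (p - 1) * |c| := by
    intro q c
    rw [Real.norm_eq_abs, abs_mul]
    exact mul_le_mul_of_nonneg_right (abs_rpow_mul_self_le hp) (abs_nonneg _)
  have Summ1 : Summable fun q : {q : V × V // G.Adj q.1 q.2} =>
      |f q.1.1 - f q.1.2| ^ (p - 2) * (f q.1.1 - f q.1.2) * g q.1.1 :=
    Summable.of_norm_bounded
      (young_summable hp (fun q => abs_nonneg (f q.1.1 - f q.1.2))
        (fun q => abs_nonneg (g q.1.1)) hA hg1) (fun q => habsbd q (g q.1.1))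
  have Summ2 : Summable fun q : {q : V × V // G.Adj q.1 q.2} =>
      |f q.1.1 - f q.1.2| ^ (p - 2) * (f q.1.1 - f q.1.2) * g q.1.2 :=
    Summable.of_norm_bounded
      (young_summable hp (fun q => abs_nonneg (f q.1.1 - f q.1.2))
        (fun q => abs_nonneg (g q.1.2)) hA hg2) (fun q => habsbd q (g q.1.2))
  -- the derivative of the series
  have hmain := (hasDerivAt_tsum_abs_rpow hp hA hB).const_mul (1/2 : ℝ)
  have hfun : (fun t : ℝ => dirichletEnergy G p fun v => f v + t * g v)
      = fun t : ℝ => (1/2 : ℝ) * ∑' q : {q : V × V // G.Adj q.1 q.2},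
          |(f q.1.1 - f q.1.2) + t * (g q.1.1 - g q.1.2)| ^ p := by
    funext t
    unfold dirichletEnergy
    congr 1
    refine tsum_congr fun q => ?_
    rw [show f q.1.1 + t * g q.1.1 - (f q.1.2 + t * g q.1.2)
      = (f q.1.1 - f q.1.2) + t * (g q.1.1 - g q.1.2) from by ring]
  rw [hfun]
  have hval : (-p * ∑' v, g v * pLaplacian G p f v)
      = (1/2 : ℝ) * ∑' q : {q : V × V // G.Adj q.1 q.2},
          p * |f q.1.1 - f q.1.2| ^ (p - 2) * (f q.1.1 - f q.1.2) * (g q.1.1 - g q.1.2) := by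
    have e0 : (∑' q : {q : V × V // G.Adj q.1 q.2},
          p * |f q.1.1 - f q.1.2| ^ (p - 2) * (f q.1.1 - f q.1.2) * (g q.1.1 - g q.1.2))
        = p * ∑' q : {q : V × V // G.Adj q.1 q.2},
          |f q.1.1 - f q.1.2| ^ (p - 2) * (f q.1.1 - f q.1.2) * (g q.1.1 - g q.1.2) := by
      rw [← tsum_mul_left]
      exact tsum_congr fun q => by ring
    rw [e0, tsum_pairing hp f g Summ1 Summ2]
    ring
  rw [hval]
  exact hmain
end

section
/- Let p > 1 and let G = (V,E) be an infinite, connected, locally finite simple graph with uniformly bounded vertex degrees. Let f, g : V → ℝ satisfy D_p(f) < ∞, Δ_p f ∈ ℓ^{p'}(V) (where p' = p/(p−1)), g ∈ ℓ^p(V), and g not identically zero. Then D_p(f + g) > D_p(f) − p·⟨g, Δ_p f⟩. -/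
open Filter Topology Metric
open scoped ENNReal Classical

section AuxCalc

variable {p : ℝ}

private lemma aux_psi_eq (hp : 1 < p) {x : ℝ} (hx : 0 ≤ x) :
    |x| ^ (p - 2) * x = x ^ (p - 1) := by
  rcases eq_or_lt_of_le hx with h | h
  · rw [← h]
    simp [Real.zero_rpow (show p - 1 ≠ 0 by intro h; linarith)]
  · rw [abs_of_pos h, show p - 1 = (p - 2) + 1 by ring, Real.rpow_add_one h.ne']

private lemma aux_psi_eq_neg (hp : 1 < p) {x : ℝ} (hx : x ≤ 0) :
    |x| ^ (p - 2) * x = -((-x) ^ (p - 1)) := by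
  have h := aux_psi_eq hp (neg_nonneg.2 hx)
  rw [abs_neg] at h
  linarith

private lemma aux_phi_strictMono (hp : 1 < p) :
    StrictMono (fun x : ℝ => p * |x| ^ (p - 2) * x) := by
  have hp1 : (0:ℝ) < p - 1 := by linarith
  intro a b hab
  have key : |a| ^ (p - 2) * a < |b| ^ (p - 2) * b := by
    rcases le_or_gt 0 a with ha | ha
    · rw [aux_psi_eq hp ha, aux_psi_eq hp (ha.trans hab.le)]
      exact Real.rpow_lt_rpow ha hab hp1
    · rcases le_or_gt 0 b with hb | hb
      · rw [aux_psi_eq_neg hp ha.le, aux_psi_eq hp hb]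
        have h1 : (0:ℝ) < (-a) ^ (p - 1) := Real.rpow_pos_of_pos (by linarith) _
        have h2 : (0:ℝ) ≤ b ^ (p - 1) := Real.rpow_nonneg hb _
        linarith
      · rw [aux_psi_eq_neg hp ha.le, aux_psi_eq_neg hp hb.le]
        have h1 : (-b) ^ (p - 1) < (-a) ^ (p - 1) :=
          Real.rpow_lt_rpow (by linarith) (by linarith) hp1
        linarith
  simp only [mul_assoc]
  exact mul_lt_mul_of_pos_left key (by linarith)

private lemma aux_hasDerivAt (hp : 1 < p) (x : ℝ) :
    HasDerivAt (fun t : ℝ => |t| ^ p) (p * |x| ^ (p - 2) * x) x := by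
  rcases lt_trichotomy x 0 with hx | hx | hx
  · have h0 : HasDerivAt (fun y : ℝ => y ^ p) (p * (-x) ^ (p - 1)) (-x) :=
      Real.hasDerivAt_rpow_const (Or.inl (by intro h; nlinarith))
    have h1 : HasDerivAt (fun t : ℝ => (-t) ^ p) (p * (-x) ^ (p - 1) * (-1)) x :=
      h0.comp x (hasDerivAt_neg x)
    have h2 : (fun t : ℝ => |t| ^ p) =ᶠ[nhds x] (fun t : ℝ => (-t) ^ p) := by
      filter_upwards [Iio_mem_nhds hx] with t ht
      rw [abs_of_neg ht]
    have h3 := h1.congr_of_eventuallyEq h2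
    refine h3.congr_deriv ?_
    rw [abs_of_neg hx, show p - 1 = (p - 2) + 1 by ring,
      Real.rpow_add_one (show -x ≠ 0 by intro h; nlinarith)]
    ring
  · subst hx
    have h0 : HasDerivAt (fun t : ℝ => |t| ^ p) 0 0 := by
      rw [hasDerivAt_iff_tendsto_slope]
      have hb : ∀ t : ℝ, ‖slope (fun t : ℝ => |t| ^ p) 0 t‖ ≤ |t| ^ (p - 1) := by
        intro t
        rcases eq_or_ne t 0 with rfl | ht
        · simp [slope_def_field, Real.rpow_nonneg]
        · have habs : |t| ≠ 0 := abs_ne_zero.2 ht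
          rw [slope_def_field]
          have h1 : |(|t| ^ p - |(0:ℝ)| ^ p) / (t - 0)| = |t| ^ p / |t| := by
            rw [abs_zero, Real.zero_rpow (show p ≠ 0 by linarith), sub_zero, sub_zero, abs_div,
              abs_of_nonneg (Real.rpow_nonneg (abs_nonneg t) _)]
          rw [Real.norm_eq_abs, h1]
          rw [div_le_iff₀ (abs_pos.2 ht), ← Real.rpow_add_one habs, sub_add_cancel]
      have hcont : Filter.Tendsto (fun t : ℝ => |t| ^ (p - 1)) (nhds 0) (nhds 0) := by
        have hc : ContinuousAt (fun y : ℝ => y ^ (p - 1)) (|(0:ℝ)|) :=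
          Real.continuousAt_rpow_const _ _ (Or.inr (by linarith))
        have h2 := hc.comp (continuous_abs.continuousAt (x := (0:ℝ)))
        rw [ContinuousAt] at h2
        have h00 : ((fun y : ℝ => y ^ (p - 1)) ∘ abs) 0 = 0 := by
          simp [Function.comp, Real.zero_rpow (show p - 1 ≠ 0 by intro h; linarith)]
        rw [h00] at h2
        refine h2.congr (fun t => ?_)
        simp [Function.comp]
      exact squeeze_zero_norm hb (hcont.mono_left nhdsWithin_le_nhds)
    convert h0 using 1
    ring
  · have h1 : HasDerivAt (fun t : ℝ => t ^ p) (p * x ^ (p - 1)) x :=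
      Real.hasDerivAt_rpow_const (Or.inl hx.ne')
    have h2 : (fun t : ℝ => |t| ^ p) =ᶠ[nhds x] (fun t : ℝ => t ^ p) := by
      filter_upwards [Ioi_mem_nhds hx] with t ht
      rw [abs_of_pos ht]
    have h3 := h1.congr_of_eventuallyEq h2
    refine h3.congr_deriv ?_
    rw [abs_of_pos hx, show p - 1 = (p - 2) + 1 by ring, Real.rpow_add_one hx.ne']
    ring

private lemma aux_grad_lt (hp : 1 < p) (a b : ℝ) (hb : b ≠ 0) :
    |a| ^ p + p * |a| ^ (p - 2) * a * b < |a + b| ^ p := by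
  set φ : ℝ → ℝ := fun x => p * |x| ^ (p - 2) * x with hφ
  have hd : ∀ x : ℝ, HasDerivAt (fun t : ℝ => |t| ^ p) (φ x) x := aux_hasDerivAt hp
  have hmono := aux_phi_strictMono hp
  have habp : p * |a| ^ (p - 2) * a * b = φ a * b := by rw [hφ]
  rcases hb.lt_or_gt with hb' | hb'
  · obtain ⟨c, hc, hceq⟩ := exists_hasDerivAt_eq_slope (fun t : ℝ => |t| ^ p) φ
      (show a + b < a by linarith)
      (fun x _ => (hd x).continuousAt.continuousWithinAt) (fun x _ => hd x)
    have hne : -b ≠ 0 := neg_ne_zero.2 hb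
    rw [show a - (a + b) = -b by ring, eq_div_iff hne, mul_neg] at hceq
    have hlt : φ c < φ a := hmono hc.2
    have hmul : φ a * b < φ c * b := mul_lt_mul_of_neg_right hlt hb'
    rw [habp]
    linarith
  · obtain ⟨c, hc, hceq⟩ := exists_hasDerivAt_eq_slope (fun t : ℝ => |t| ^ p) φ
      (show a < a + b by linarith)
      (fun x _ => (hd x).continuousAt.continuousWithinAt) (fun x _ => hd x)
    rw [show a + b - a = b by ring, eq_div_iff hb] at hceq
    have hlt : φ a < φ c := hmono hc.1
    have hmul : φ a * b < φ c * b := mul_lt_mul_of_pos_right hlt hb'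
    rw [habp]
    linarith

private lemma aux_grad_le (hp : 1 < p) (a b : ℝ) :
    |a| ^ p + p * |a| ^ (p - 2) * a * b ≤ |a + b| ^ p := by
  rcases eq_or_ne b 0 with rfl | hb
  · simp
  · exact (aux_grad_lt hp a b hb).le

private lemma aux_young (hp : 1 < p) (a b : ℝ) :
    |a| ^ (p - 1) * |b| ≤ |a| ^ p + |b| ^ p := by
  have hp1 : (0:ℝ) < p - 1 := by linarith
  have hpq : (p / (p - 1)).HolderConjugate p := by
    rw [Real.holderConjugate_iff]
    constructor
    · rw [lt_div_iff₀ hp1]; linarith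
    · rw [inv_div]
      field_simp
      ring
  have h := Real.young_inequality_of_nonneg
    (Real.rpow_nonneg (abs_nonneg a) (p - 1)) (abs_nonneg b) hpq
  have h1 : (|a| ^ (p - 1)) ^ (p / (p - 1)) = |a| ^ p := by
    rw [← Real.rpow_mul (abs_nonneg a)]
    congr 1
    field_simp
  rw [h1] at h
  have h2 : |a| ^ p / (p / (p - 1)) ≤ |a| ^ p :=
    div_le_self (Real.rpow_nonneg (abs_nonneg a) _) (by rw [le_div_iff₀ hp1]; linarith)
  have h3 : |b| ^ p / p ≤ |b| ^ p :=
    div_le_self (Real.rpow_nonneg (abs_nonneg b) _) (by linarith)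
  linarith

private lemma aux_abs_psi (hp : 1 < p) (a : ℝ) :
    abs (|a| ^ (p - 2) * a) = |a| ^ (p - 1) := by
  rcases eq_or_ne a 0 with rfl | ha
  · simp [Real.zero_rpow (show p - 1 ≠ 0 by intro h; linarith)]
  · rw [abs_mul, abs_of_nonneg (Real.rpow_nonneg (abs_nonneg a) _),
      show p - 1 = (p - 2) + 1 by ring, Real.rpow_add_one (abs_ne_zero.2 ha)]

private lemma aux_two_rpow (hp : 1 < p) (x y : ℝ) :
    |x + y| ^ p ≤ 2 ^ p * (|x| ^ p + |y| ^ p) := by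
  have hp0 : (0:ℝ) < p := by linarith
  have h1 : |x + y| ≤ 2 * max |x| |y| := by
    refine (abs_add_le x y).trans ?_
    have := le_max_left |x| |y|
    have := le_max_right |x| |y|
    linarith
  have h2 : |x + y| ^ p ≤ (2 * max |x| |y|) ^ p :=
    Real.rpow_le_rpow (abs_nonneg _) h1 hp0.le
  rw [Real.mul_rpow (by norm_num) (le_trans (abs_nonneg x) (le_max_left _ _))] at h2
  refine h2.trans (mul_le_mul_of_nonneg_left ?_ (Real.rpow_nonneg (by norm_num) _))
  rcases max_cases |x| |y| with ⟨h, _⟩ | ⟨h, _⟩ <;> rw [h]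
  · exact le_add_of_nonneg_right (Real.rpow_nonneg (abs_nonneg _) _)
  · exact le_add_of_nonneg_left (Real.rpow_nonneg (abs_nonneg _) _)

end AuxCalc

section AuxGraph

variable {V : Type*} (G : SimpleGraph V)

private def edgeEquiv : {q : V × V // G.Adj q.1 q.2} ≃ Σ u : V, G.neighborSet u where
  toFun q := ⟨q.1.1, ⟨q.1.2, q.2⟩⟩
  invFun s := ⟨(s.1, s.2.1), s.2.2⟩
  left_inv q := rfl
  right_inv s := rfl

private def edgeSwap : {q : V × V // G.Adj q.1 q.2} ≃ {q : V × V // G.Adj q.1 q.2} where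
  toFun q := ⟨(q.1.2, q.1.1), q.2.symm⟩
  invFun q := ⟨(q.1.2, q.1.1), q.2.symm⟩
  left_inv q := rfl
  right_inv q := rfl

private lemma aux_walk_const {G : SimpleGraph V} {g : V → ℝ}
    (hconst : ∀ u v : V, G.Adj u v → g u = g v) :
    ∀ {u v : V}, G.Walk u v → g u = g v := by
  intro u v w
  induction w with
  | nil => rfl
  | cons h _ ih => exact (hconst _ _ h).trans ih

variable [∀ v : V, Fintype (G.neighborSet v)]

private lemma aux_summable_edge_iff_sigma (F : V → V → ℝ) :
    Summable (fun q : {q : V × V // G.Adj q.1 q.2} => F q.1.1 q.1.2) ↔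
      Summable (fun s : Σ u : V, G.neighborSet u => F s.1 s.2) := by
  constructor
  · intro h
    exact ((edgeEquiv G).summable_iff
      (f := fun s : Σ u : V, G.neighborSet u => F s.1 s.2)).1 h
  · intro h
    exact ((edgeEquiv G).summable_iff
      (f := fun s : Σ u : V, G.neighborSet u => F s.1 s.2)).2 h

private lemma aux_tsum_edge (F : V → V → ℝ)
    (h : Summable (fun s : Σ u : V, G.neighborSet u => F s.1 s.2)) :
    ∑' q : {q : V × V // G.Adj q.1 q.2}, F q.1.1 q.1.2
      = ∑' u : V, ∑ v : G.neighborSet u, F u v := by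
  have h1 : ∑' q : {q : V × V // G.Adj q.1 q.2}, F q.1.1 q.1.2
      = ∑' s : Σ u : V, G.neighborSet u, F s.1 s.2 :=
    (edgeEquiv G).tsum_eq (fun s : Σ u : V, G.neighborSet u => F s.1 s.2)
  rw [h1, Summable.tsum_sigma h]
  exact tsum_congr fun u => tsum_fintype _

private lemma aux_summable_edge_of_nonneg (F : V → V → ℝ)
    (hF : ∀ u v, 0 ≤ F u v) (M : V → ℝ) (hM : Summable M)
    (hb : ∀ u : V, ∑ v : G.neighborSet u, F u v ≤ M u) :
    Summable (fun q : {q : V × V // G.Adj q.1 q.2} => F q.1.1 q.1.2) := by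
  rw [aux_summable_edge_iff_sigma]
  refine (summable_sigma_of_nonneg (fun s => hF _ _)).2
    ⟨fun u => (hasSum_fintype _).summable, ?_⟩
  refine Summable.of_nonneg_of_le (fun u => ?_) (fun u => ?_) hM
  · rw [tsum_fintype]
    exact Finset.sum_nonneg fun v _ => hF _ _
  · rw [tsum_fintype]
    exact hb u

private lemma aux_summable_fiber (F : V → V → ℝ) (hF : ∀ u v, 0 ≤ F u v)
    (h : Summable (fun q : {q : V × V // G.Adj q.1 q.2} => F q.1.1 q.1.2)) :
    Summable (fun u : V => ∑ v : G.neighborSet u, F u v) := by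
  rw [aux_summable_edge_iff_sigma] at h
  have h2 := (summable_sigma_of_nonneg (fun s => hF _ _)).1 h
  exact h2.2.congr fun u => tsum_fintype _

private lemma aux_pLaplacian_eq (p : ℝ) (f : V → ℝ) (u : V) :
    pLaplacian G p f u
      = ∑ v : G.neighborSet u, |f (v : V) - f u| ^ (p - 2) * (f v - f u) := by
  have h1 : ∀ w ∉ (G.neighborSet u).toFinset,
      (if G.Adj w u then |f w - f u| ^ (p - 2) * (f w - f u) else 0) = 0 := by
    intro w hw
    rw [if_neg]
    exact fun hadj => hw (Set.mem_toFinset.2 hadj.symm)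
  rw [pLaplacian, tsum_eq_sum h1,
    Finset.sum_congr rfl
      (fun w hw => if_pos ((G.mem_neighborSet u w).1 (Set.mem_toFinset.1 hw)).symm)]
  exact Finset.sum_subtype _ (fun x => Set.mem_toFinset) _

private lemma aux_pLaplacian_neg (p : ℝ) (f : V → ℝ) (u : V) :
    ∑ v : G.neighborSet u, |f u - f (v : V)| ^ (p - 2) * (f u - f v)
      = - pLaplacian G p f u := by
  rw [aux_pLaplacian_eq G p f u, ← Finset.sum_neg_distrib]
  exact Finset.sum_congr rfl fun v _ => by rw [abs_sub_comm]; ring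

end AuxGraph

/-- strict convexity of the `p`-Dirichlet energy:
`D_p(f + g) > D_p(f) - p ⟨g, Δ_p f⟩` whenever `g ∈ ℓ^p` is not identically zero. -/
theorem dirichletEnergy_strict_convexity {V : Type*} [Infinite V] (p : ℝ) (hp : 1 < p)
    (G : SimpleGraph V) (hconn : G.Connected) (hlf : LocFin G) (hbd : BddDeg G)
    (f g : V → ℝ) (hD : DirichletSummable G p f)
    (hΔ : Summable fun v => |pLaplacian G p f v| ^ (p / (p - 1)))
    (hg : Summable fun v => |g v| ^ p) (hg0 : g ≠ 0) :
    dirichletEnergy G p (fun v => f v + g v) >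
      dirichletEnergy G p f - p * ∑' v, g v * pLaplacian G p f v := by
  classical
  haveI : ∀ v : V, Fintype (G.neighborSet v) := fun v => (hlf v).fintype
  obtain ⟨D, hDeg⟩ := hbd
  have hp0 : (0:ℝ) < p := by linarith
  set X : {q : V × V // G.Adj q.1 q.2} → ℝ :=
    fun q => |f q.1.1 - f q.1.2| ^ (p - 2) * (f q.1.1 - f q.1.2) with hXdef
  have hDf : Summable (fun q : {q : V × V // G.Adj q.1 q.2} =>
      |f q.1.1 - f q.1.2| ^ p) := hD
  -- summability of |g| ^ p over edges
  have hg1 : Summable (fun q : {q : V × V // G.Adj q.1 q.2} => |g q.1.1| ^ p) := by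
    refine aux_summable_edge_of_nonneg G (fun u v => |g u| ^ p)
      (fun u v => Real.rpow_nonneg (abs_nonneg _) _) (fun u => (D : ℝ) * |g u| ^ p)
      (hg.mul_left _) (fun u => ?_)
    rw [Finset.sum_const, Finset.card_univ, ← Set.toFinset_card,
      ← Set.ncard_eq_toFinset_card', nsmul_eq_mul]
    exact mul_le_mul_of_nonneg_right (by exact_mod_cast hDeg u)
      (Real.rpow_nonneg (abs_nonneg _) _)
  have hg2 : Summable (fun q : {q : V × V // G.Adj q.1 q.2} => |g q.1.2| ^ p) :=
    ((edgeSwap G).summable_iff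
      (f := fun q : {q : V × V // G.Adj q.1 q.2} => |g q.1.1| ^ p)).2 hg1
  -- summability of |dg| ^ p over edges
  have hdg : Summable (fun q : {q : V × V // G.Adj q.1 q.2} =>
      |g q.1.1 - g q.1.2| ^ p) := by
    refine Summable.of_nonneg_of_le (fun q => Real.rpow_nonneg (abs_nonneg _) _)
      (fun q => ?_) ((hg1.add hg2).mul_left (2 ^ p))
    have h := aux_two_rpow hp (g q.1.1) (-g q.1.2)
    rw [← sub_eq_add_neg, abs_neg] at h
    exact h
  -- summability of the (f+g)-energy over edges
  have hfg : Summable (fun q : {q : V × V // G.Adj q.1 q.2} =>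
      |f q.1.1 + g q.1.1 - (f q.1.2 + g q.1.2)| ^ p) := by
    refine Summable.of_nonneg_of_le (fun q => Real.rpow_nonneg (abs_nonneg _) _)
      (fun q => ?_) ((hDf.add hdg).mul_left (2 ^ p))
    have h := aux_two_rpow hp (f q.1.1 - f q.1.2) (g q.1.1 - g q.1.2)
    rw [show (f q.1.1 - f q.1.2) + (g q.1.1 - g q.1.2)
      = f q.1.1 + g q.1.1 - (f q.1.2 + g q.1.2) from by ring] at h
    exact h
  -- summability of X q * g q.1.1, with absolute values
  have hYabs : Summable (fun q : {q : V × V // G.Adj q.1 q.2} =>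
      |X q * g q.1.1|) := by
    refine Summable.of_nonneg_of_le (fun q => abs_nonneg _) (fun q => ?_) (hDf.add hg1)
    rw [hXdef, abs_mul, aux_abs_psi hp]
    exact aux_young hp _ _
  have hY : Summable (fun q : {q : V × V // G.Adj q.1 q.2} => X q * g q.1.1) :=
    hYabs.of_abs
  -- swap: X (edgeSwap q) = - X q
  have hXswap : ∀ q : {q : V × V // G.Adj q.1 q.2}, X (edgeSwap G q) = - X q := by
    intro q
    show |f q.1.2 - f q.1.1| ^ (p - 2) * (f q.1.2 - f q.1.1)
      = -(|f q.1.1 - f q.1.2| ^ (p - 2) * (f q.1.1 - f q.1.2))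
    rw [abs_sub_comm]
    ring
  have hYσ : Summable ((fun q : {q : V × V // G.Adj q.1 q.2} => X q * g q.1.1)
      ∘ (edgeSwap G)) := ((edgeSwap G).summable_iff).2 hY
  have hYσeq : ∀ q : {q : V × V // G.Adj q.1 q.2},
      ((fun q : {q : V × V // G.Adj q.1 q.2} => X q * g q.1.1) ∘ (edgeSwap G)) q
        = -(X q * g q.1.2) := by
    intro q
    show X (edgeSwap G q) * g q.1.2 = -(X q * g q.1.2)
    rw [hXswap q]
    ring
  have hY2 : Summable (fun q : {q : V × V // G.Adj q.1 q.2} => X q * g q.1.2) := by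
    have h := (hYσ.congr hYσeq).neg
    exact h.congr fun q => by ring
  have htY2 : ∑' q : {q : V × V // G.Adj q.1 q.2}, X q * g q.1.2
      = - ∑' q : {q : V × V // G.Adj q.1 q.2}, X q * g q.1.1 := by
    have h : ∑' q : {q : V × V // G.Adj q.1 q.2}, -(X q * g q.1.2)
        = ∑' q : {q : V × V // G.Adj q.1 q.2}, X q * g q.1.1 := by
      rw [← tsum_congr hYσeq]
      exact (edgeSwap G).tsum_eq (fun q : {q : V × V // G.Adj q.1 q.2} => X q * g q.1.1)
    rw [tsum_neg] at h
    linarith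
  -- summability of the cross term
  have hT : Summable (fun q : {q : V × V // G.Adj q.1 q.2} =>
      X q * (g q.1.1 - g q.1.2)) :=
    (hY.sub hY2).congr fun q => by ring
  have htT : ∑' q : {q : V × V // G.Adj q.1 q.2}, X q * (g q.1.1 - g q.1.2)
      = 2 * ∑' q : {q : V × V // G.Adj q.1 q.2}, X q * g q.1.1 := by
    rw [tsum_congr (f := fun q : {q : V × V // G.Adj q.1 q.2} => X q * (g q.1.1 - g q.1.2))
      (g := fun q : {q : V × V // G.Adj q.1 q.2} => X q * g q.1.1 - X q * g q.1.2)
      (fun q => by ring), Summable.tsum_sub hY hY2, htY2]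
    ring
  -- identify ∑' Y with - ∑' g * Δ
  have htYL : ∑' q : {q : V × V // G.Adj q.1 q.2}, X q * g q.1.1
      = - ∑' v : V, g v * pLaplacian G p f v := by
    have h1 : ∑' q : {q : V × V // G.Adj q.1 q.2},
        |f q.1.1 - f q.1.2| ^ (p - 2) * (f q.1.1 - f q.1.2) * g q.1.1
        = ∑' u : V, ∑ v : G.neighborSet u,
          |f u - f (v : V)| ^ (p - 2) * (f u - f v) * g u :=
      aux_tsum_edge G (fun u v : V => |f u - f v| ^ (p - 2) * (f u - f v) * g u)
        ((aux_summable_edge_iff_sigma G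
          (fun u v : V => |f u - f v| ^ (p - 2) * (f u - f v) * g u)).1 hY)
    have h2 : ∀ u : V, (∑ v : G.neighborSet u,
        |f u - f (v : V)| ^ (p - 2) * (f u - f v) * g u)
        = -(g u * pLaplacian G p f u) := by
      intro u
      rw [← Finset.sum_mul, aux_pLaplacian_neg G p f u]
      ring
    calc ∑' q : {q : V × V // G.Adj q.1 q.2}, X q * g q.1.1
        = ∑' u : V, ∑ v : G.neighborSet u,
            |f u - f (v : V)| ^ (p - 2) * (f u - f v) * g u := h1
      _ = ∑' u : V, -(g u * pLaplacian G p f u) := tsum_congr h2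
      _ = - ∑' u : V, g u * pLaplacian G p f u := tsum_neg
  -- a vertex where g differs along an edge
  obtain ⟨q₀, hq₀⟩ : ∃ q : {q : V × V // G.Adj q.1 q.2}, g q.1.1 - g q.1.2 ≠ 0 := by
    by_contra hcon
    push_neg at hcon
    have hconst : ∀ u v : V, G.Adj u v → g u = g v := by
      intro u v huv
      have := hcon ⟨(u, v), huv⟩
      linarith [sub_eq_zero.1 this]
    obtain ⟨v₀, hv₀⟩ : ∃ v₀ : V, g v₀ ≠ 0 := by
      by_contra h0
      push_neg at h0
      exact hg0 (funext h0)
    have hall : ∀ v : V, g v = g v₀ := by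
      intro v
      obtain ⟨w⟩ := hconn.preconnected v v₀
      exact aux_walk_const hconst w
    have hsum : Summable (fun _ : V => |g v₀| ^ p) :=
      hg.congr fun v => by rw [hall v]
    have hpos : (0:ℝ) < |g v₀| ^ p := Real.rpow_pos_of_pos (abs_pos.2 hv₀) _
    haveI := Finite.of_summable_const hpos hsum
    exact not_finite V
  -- pointwise convexity inequalities
  have hpt : ∀ q : {q : V × V // G.Adj q.1 q.2},
      |f q.1.1 - f q.1.2| ^ p + p * (X q * (g q.1.1 - g q.1.2))
        ≤ |f q.1.1 + g q.1.1 - (f q.1.2 + g q.1.2)| ^ p := by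
    intro q
    have h := aux_grad_le hp (f q.1.1 - f q.1.2) (g q.1.1 - g q.1.2)
    rw [show (f q.1.1 - f q.1.2) + (g q.1.1 - g q.1.2)
      = f q.1.1 + g q.1.1 - (f q.1.2 + g q.1.2) from by ring] at h
    simp only [hXdef]
    linarith [h]
  have hpt0 : |f q₀.1.1 - f q₀.1.2| ^ p + p * (X q₀ * (g q₀.1.1 - g q₀.1.2))
      < |f q₀.1.1 + g q₀.1.1 - (f q₀.1.2 + g q₀.1.2)| ^ p := by
    have h := aux_grad_lt hp (f q₀.1.1 - f q₀.1.2) (g q₀.1.1 - g q₀.1.2) hq₀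
    rw [show (f q₀.1.1 - f q₀.1.2) + (g q₀.1.1 - g q₀.1.2)
      = f q₀.1.1 + g q₀.1.1 - (f q₀.1.2 + g q₀.1.2) from by ring] at h
    simp only [hXdef]
    linarith [h]
  -- strict tsum inequality
  have hsumL : Summable (fun q : {q : V × V // G.Adj q.1 q.2} =>
      |f q.1.1 - f q.1.2| ^ p + p * (X q * (g q.1.1 - g q.1.2))) :=
    hDf.add (hT.mul_left p)
  have key : ∑' q : {q : V × V // G.Adj q.1 q.2},
      (|f q.1.1 - f q.1.2| ^ p + p * (X q * (g q.1.1 - g q.1.2)))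
      < ∑' q : {q : V × V // G.Adj q.1 q.2},
        |f q.1.1 + g q.1.1 - (f q.1.2 + g q.1.2)| ^ p :=
    Summable.tsum_lt_tsum hpt hpt0 hsumL hfg
  have hLsplit : ∑' q : {q : V × V // G.Adj q.1 q.2},
      (|f q.1.1 - f q.1.2| ^ p + p * (X q * (g q.1.1 - g q.1.2)))
      = (∑' q : {q : V × V // G.Adj q.1 q.2}, |f q.1.1 - f q.1.2| ^ p)
        + p * ∑' q : {q : V × V // G.Adj q.1 q.2}, X q * (g q.1.1 - g q.1.2) := by
    rw [Summable.tsum_add hDf (hT.mul_left p), tsum_mul_left]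
  rw [hLsplit, htT, htYL] at key
  -- unfold energies
  rw [dirichletEnergy, dirichletEnergy]
  have hbeta : ∑' q : {q : V × V // G.Adj q.1 q.2},
      |(fun v => f v + g v) q.1.1 - (fun v => f v + g v) q.1.2| ^ p
      = ∑' q : {q : V × V // G.Adj q.1 q.2},
        |f q.1.1 + g q.1.1 - (f q.1.2 + g q.1.2)| ^ p := rfl
  rw [hbeta]
  linarith [key]
end

section
/- Let p > 1 and let G = (V,E) be an infinite, connected, locally finite simple graph with uniformly bounded vertex degrees. If f, h : V → ℝ are both p-harmonic with D_p(f) < ∞ and D_p(h) < ∞, and h − f ∈ ℓ^p(V), then h = f. (In particular, each degree-one L^p-cohomology class of G contains at most one p-harmonic function up to constants.) -/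
open Filter Topology Metric
open scoped ENNReal Classical

/-! ### Auxiliary lemmas for Statement 10 -/

noncomputable def phiR (p t : ℝ) : ℝ := |t| ^ (p - 2) * t

lemma phiR_neg (p t : ℝ) : phiR p (-t) = - phiR p t := by
  simp [phiR, abs_neg, mul_neg]

lemma phiR_of_nonneg {p : ℝ} (hp : 1 < p) {t : ℝ} (ht : 0 ≤ t) :
    phiR p t = t ^ (p - 1) := by
  rcases eq_or_lt_of_le ht with h | h
  · rw [← h]
    simp [phiR, Real.zero_rpow (by linarith : p - (1:ℝ) ≠ 0)]
  · rw [phiR, abs_of_pos h]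
    rw [show p - 1 = p - 2 + 1 by ring, Real.rpow_add_one (ne_of_gt h)]

lemma phiR_lt {p : ℝ} (hp : 1 < p) {a b : ℝ} (hab : a < b) : phiR p a < phiR p b := by
  have hp1 : (0:ℝ) < p - 1 := by linarith
  rcases le_or_gt 0 a with ha | ha
  · rw [phiR_of_nonneg hp ha, phiR_of_nonneg hp (le_of_lt (lt_of_le_of_lt ha hab))]
    exact Real.rpow_lt_rpow ha hab hp1
  · rcases le_or_gt b 0 with hb | hb
    · have h1 : phiR p a = -phiR p (-a) := by rw [← phiR_neg]; ring_nf
      have h2 : phiR p b = -phiR p (-b) := by rw [← phiR_neg]; ring_nf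
      rw [h1, h2, neg_lt_neg_iff]
      rw [phiR_of_nonneg hp (by linarith : (0:ℝ) ≤ -b),
        phiR_of_nonneg hp (by linarith : (0:ℝ) ≤ -a)]
      exact Real.rpow_lt_rpow (by linarith) (by linarith) hp1
    · have h1 : phiR p a = -phiR p (-a) := by rw [← phiR_neg]; ring_nf
      have h2 : phiR p (-a) = (-a) ^ (p-1) := phiR_of_nonneg hp (by linarith)
      have h3 : phiR p b = b ^ (p-1) := phiR_of_nonneg hp (le_of_lt hb)
      have h4 : (0:ℝ) < (-a) ^ (p-1) := Real.rpow_pos_of_pos (by linarith) _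
      have h5 : (0:ℝ) < b ^ (p-1) := Real.rpow_pos_of_pos hb _
      rw [h1, h2, h3]; linarith

lemma phiR_key_nonneg {p : ℝ} (hp : 1 < p) (a b : ℝ) :
    0 ≤ (a - b) * (phiR p a - phiR p b) := by
  rcases lt_trichotomy a b with h | h | h
  · have h1 := phiR_lt hp h
    have := mul_pos_of_neg_of_neg (sub_neg.2 h) (sub_neg.2 h1)
    linarith
  · simp [h]
  · have h1 := phiR_lt hp h
    have := mul_pos (sub_pos.2 h) (sub_pos.2 h1)
    linarith

lemma phiR_key_pos {p : ℝ} (hp : 1 < p) {a b : ℝ} (hab : a ≠ b) :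
    0 < (a - b) * (phiR p a - phiR p b) := by
  rcases lt_trichotomy a b with h | h | h
  · exact mul_pos_of_neg_of_neg (sub_neg.2 h) (sub_neg.2 (phiR_lt hp h))
  · exact absurd h hab
  · exact mul_pos (sub_pos.2 h) (sub_pos.2 (phiR_lt hp h))

lemma phiR_abs {p : ℝ} (hp : 1 < p) (t : ℝ) : |phiR p t| = |t| ^ (p - 1) := by
  rcases eq_or_ne t 0 with rfl | ht
  · simp [phiR, Real.zero_rpow (by linarith : p - (1:ℝ) ≠ 0)]
  · have h0 : (0:ℝ) < |t| := abs_pos.2 ht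
    rw [phiR, abs_mul, abs_of_nonneg (Real.rpow_nonneg (abs_nonneg t) _),
      show p - 1 = p - 2 + 1 by ring, Real.rpow_add_one (ne_of_gt h0)]

lemma young_aux {p : ℝ} (hp : 1 < p) {x y : ℝ} (hx : 0 ≤ x) (hy : 0 ≤ y) :
    x ^ (p - 1) * y ≤ x ^ p + y ^ p := by
  have hp1 : (0:ℝ) ≤ p - 1 := by linarith
  have hxp : x ^ (p-1) * x = x ^ p := by
    rcases eq_or_lt_of_le hx with h | h
    · rw [← h, Real.zero_rpow (by linarith : p - (1:ℝ) ≠ 0), zero_mul,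
        Real.zero_rpow (by linarith : p ≠ 0)]
    · rw [← Real.rpow_add_one (ne_of_gt h)]; ring_nf
  have hyp : y ^ (p-1) * y = y ^ p := by
    rcases eq_or_lt_of_le hy with h | h
    · rw [← h, Real.zero_rpow (by linarith : p - (1:ℝ) ≠ 0), zero_mul,
        Real.zero_rpow (by linarith : p ≠ 0)]
    · rw [← Real.rpow_add_one (ne_of_gt h)]; ring_nf
  rcases le_total y x with h | h
  · have h1 : x ^ (p-1) * y ≤ x ^ (p-1) * x :=
      mul_le_mul_of_nonneg_left h (Real.rpow_nonneg hx _)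
    have hy0 : 0 ≤ y ^ p := Real.rpow_nonneg hy _
    rw [hxp] at h1; linarith
  · have h1 : x ^ (p-1) ≤ y ^ (p-1) := Real.rpow_le_rpow hx h hp1
    have h2 : x ^ (p-1) * y ≤ y ^ (p-1) * y := mul_le_mul_of_nonneg_right h1 hy
    have hx0 : 0 ≤ x ^ p := Real.rpow_nonneg hx _
    rw [hyp] at h2; linarith

lemma pLaplacian_eq_tsum_subtype {V : Type*} (G : SimpleGraph V) (p : ℝ) (f : V → ℝ) (v : V) :
    pLaplacian G p f v = ∑' a : {u | G.Adj u v}, phiR p (f a - f v) := by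
  rw [pLaplacian, tsum_subtype {u | G.Adj u v} (fun u => phiR p (f u - f v))]
  congr 1

def swapPair {V : Type*} (G : SimpleGraph V) :
    {q : V × V // G.Adj q.1 q.2} ≃ {q : V × V // G.Adj q.1 q.2} where
  toFun q := ⟨(q.1.2, q.1.1), q.2.symm⟩
  invFun q := ⟨(q.1.2, q.1.1), q.2.symm⟩
  left_inv := fun ⟨⟨a,b⟩,hab⟩ => rfl
  right_inv := fun ⟨⟨a,b⟩,hab⟩ => rfl

set_option maxHeartbeats 2000000 in
/-- two `p`-Dirichlet `p`-harmonic functions differing by an `ℓ^p`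
function coincide. -/
theorem pharmonic_unique_in_class {V : Type*} [Infinite V] (p : ℝ) (hp : 1 < p)
    (G : SimpleGraph V) (hconn : G.Connected) (hlf : LocFin G) (hbd : BddDeg G)
    (f h : V → ℝ) (hfharm : IsPHarmonic G p f) (hhharm : IsPHarmonic G p h)
    (hfD : DirichletSummable G p f) (hhD : DirichletSummable G p h)
    (hdiff : Summable fun v => |h v - f v| ^ p) :
    h = f := by
  classical
  obtain ⟨D, hD⟩ := hbd
  have hUnn : ∀ v : V, 0 ≤ |h v - f v| ^ p := fun v => Real.rpow_nonneg (abs_nonneg _) _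
  -- Summability of |U q.1.2|^p over adjacent pairs, via bounded degree
  have hUQ2 : Summable fun q : {q : V × V // G.Adj q.1 q.2} => |h q.1.2 - f q.1.2| ^ p := by
    apply summable_of_sum_le (c := (D:ℝ) * ∑' v, |h v - f v| ^ p) (fun q => hUnn _)
    intro s
    calc ∑ q ∈ s, |h q.1.2 - f q.1.2| ^ p
        = ∑ v ∈ s.image (fun q => q.1.2),
            (s.filter fun q => q.1.2 = v).card • (|h v - f v| ^ p) :=
          Finset.sum_comp (fun v => |h v - f v| ^ p) (fun q : {q : V × V // G.Adj q.1 q.2} => q.1.2)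
      _ ≤ ∑ v ∈ s.image (fun q => q.1.2), (D:ℝ) * (|h v - f v| ^ p) := by
          apply Finset.sum_le_sum
          intro v hv
          rw [nsmul_eq_mul]
          apply mul_le_mul_of_nonneg_right _ (hUnn v)
          have hcard : (s.filter fun q => q.1.2 = v).card ≤ D := by
            have hle : (s.filter fun q => q.1.2 = v).card ≤ ((hlf v).toFinset).card := by
              apply Finset.card_le_card_of_injOn (fun q => q.1.1)
              · intro q hq
                refine Finset.mem_coe.2 ((Set.Finite.mem_toFinset _).2 ?_)
                have hq2 : q.1.2 = v := (Finset.mem_filter.1 hq).2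
                exact ((hq2 ▸ q.2 : G.Adj q.1.1 v)).symm
              · intro q1 h1 q2 h2 hval
                have e1 : q1.1.2 = v := (Finset.mem_filter.1 h1).2
                have e2 : q2.1.2 = v := (Finset.mem_filter.1 h2).2
                exact Subtype.ext (Prod.ext hval (e1.trans e2.symm))
            have hcf : ((hlf v).toFinset).card = (G.neighborSet v).ncard :=
              (Set.ncard_eq_toFinset_card (G.neighborSet v) (hlf v)).symm
            rw [hcf] at hle
            exact hle.trans (hD v)
          exact_mod_cast hcard
      _ = (D:ℝ) * ∑ v ∈ s.image (fun q => q.1.2), |h v - f v| ^ p := by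
          rw [Finset.mul_sum]
      _ ≤ (D:ℝ) * ∑' v, |h v - f v| ^ p := by
          apply mul_le_mul_of_nonneg_left _ (Nat.cast_nonneg D)
          exact Summable.sum_le_tsum _ (fun v _ => hUnn v) hdiff
  -- The edge function Φ
  set Φ : {q : V × V // G.Adj q.1 q.2} → ℝ :=
    fun q => phiR p (h q.1.1 - h q.1.2) - phiR p (f q.1.1 - f q.1.2) with hPhidef
  have habsPhi : ∀ q : {q : V × V // G.Adj q.1 q.2},
      |Φ q| ≤ |h q.1.1 - h q.1.2| ^ (p-1) + |f q.1.1 - f q.1.2| ^ (p-1) := by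
    intro q
    calc |Φ q| ≤ |phiR p (h q.1.1 - h q.1.2)| + |phiR p (f q.1.1 - f q.1.2)| :=
          abs_sub _ _
      _ = _ := by rw [phiR_abs hp, phiR_abs hp]
  have hbound : ∀ q : {q : V × V // G.Adj q.1 q.2}, |(h q.1.2 - f q.1.2) * Φ q| ≤
      (|h q.1.1 - h q.1.2| ^ p + |h q.1.2 - f q.1.2| ^ p) +
      (|f q.1.1 - f q.1.2| ^ p + |h q.1.2 - f q.1.2| ^ p) := by
    intro q
    rw [abs_mul, mul_comm]
    calc |Φ q| * |h q.1.2 - f q.1.2|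
        ≤ (|h q.1.1 - h q.1.2| ^ (p-1) + |f q.1.1 - f q.1.2| ^ (p-1)) * |h q.1.2 - f q.1.2| :=
          mul_le_mul_of_nonneg_right (habsPhi q) (abs_nonneg _)
      _ = |h q.1.1 - h q.1.2| ^ (p-1) * |h q.1.2 - f q.1.2|
          + |f q.1.1 - f q.1.2| ^ (p-1) * |h q.1.2 - f q.1.2| := by ring
      _ ≤ _ := add_le_add (young_aux hp (abs_nonneg _) (abs_nonneg _))
          (young_aux hp (abs_nonneg _) (abs_nonneg _))
  have hg2 : Summable fun q : {q : V × V // G.Adj q.1 q.2} => (h q.1.2 - f q.1.2) * Φ q := by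
    apply Summable.of_norm
    simp only [Real.norm_eq_abs]
    exact Summable.of_nonneg_of_le (fun q => abs_nonneg _) hbound
      ((hhD.add hUQ2).add (hfD.add hUQ2))
  -- swap symmetry
  have hswPhi : ∀ q : {q : V × V // G.Adj q.1 q.2}, Φ (swapPair G q) = -Φ q := by
    rintro ⟨⟨a, b⟩, hab⟩
    show phiR p (h b - h a) - phiR p (f b - f a) = _
    rw [show h b - h a = -(h a - h b) by ring, show f b - f a = -(f a - f b) by ring,
      phiR_neg, phiR_neg]
    simp [hPhidef]
    ring
  have hg2sw : ∀ q : {q : V × V // G.Adj q.1 q.2},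
      (h (swapPair G q).1.2 - f (swapPair G q).1.2) * Φ (swapPair G q)
        = -((h q.1.1 - f q.1.1) * Φ q) := by
    rintro ⟨⟨a, b⟩, hab⟩
    rw [hswPhi ⟨(a, b), hab⟩]
    show (h a - f a) * (-Φ ⟨(a,b),hab⟩) = _
    ring
  have hg1 : Summable fun q : {q : V × V // G.Adj q.1 q.2} => (h q.1.1 - f q.1.1) * Φ q := by
    have h1 : Summable ((fun q : {q : V × V // G.Adj q.1 q.2} => (h q.1.2 - f q.1.2) * Φ q)
        ∘ (swapPair G)) := (swapPair G).summable_iff.2 hg2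
    have h2 : ((fun q : {q : V × V // G.Adj q.1 q.2} => (h q.1.2 - f q.1.2) * Φ q)
        ∘ (swapPair G)) = fun q => -((h q.1.1 - f q.1.1) * Φ q) := funext hg2sw
    rw [h2] at h1
    simpa using h1.neg
  -- fiberwise vanishing: S₂ = 0
  have hfib : ∀ v : V,
      (∑' x : (fun q : {q : V × V // G.Adj q.1 q.2} => q.1.2) ⁻¹' {v},
        (h (x : {q : V × V // G.Adj q.1 q.2}).1.2 - f (x : {q : V × V // G.Adj q.1 q.2}).1.2)
          * Φ (x : {q : V × V // G.Adj q.1 q.2})) = 0 := by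
    intro v
    have hfin : ({u | G.Adj u v} : Set V).Finite := by
      have hset : {u | G.Adj u v} = G.neighborSet v := Set.ext fun u => G.adj_comm u v
      rw [hset]; exact hlf v
    haveI : Fintype ({u | G.Adj u v} : Set V) := hfin.fintype
    let E : ({u | G.Adj u v} : Set V) ≃
        ((fun q : {q : V × V // G.Adj q.1 q.2} => q.1.2) ⁻¹' {v}) :=
      { toFun := fun a => ⟨⟨(a.1, v), a.2⟩, rfl⟩
        invFun := fun x => ⟨x.1.1.1, by
          have h3 : G.Adj x.1.1.1 x.1.1.2 := x.1.2
          have h2 : x.1.1.2 = v := x.2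
          rwa [h2] at h3⟩
        left_inv := fun ⟨a, ha⟩ => rfl
        right_inv := fun x => by
          rcases x with ⟨⟨⟨a, b⟩, hab⟩, hb⟩
          have hb' : b = v := hb
          subst hb'
          rfl }
    rw [← E.tsum_eq]
    have hEq : ∀ a : ({u | G.Adj u v} : Set V),
        (h ((E a : {q : V × V // G.Adj q.1 q.2})).1.2
          - f ((E a : {q : V × V // G.Adj q.1 q.2})).1.2)
          * Φ (E a : {q : V × V // G.Adj q.1 q.2})
        = (h v - f v) * (phiR p (h a - h v) - phiR p (f a - f v)) := fun a => rfl
    rw [tsum_congr hEq, tsum_mul_left,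
      Summable.tsum_sub (Summable.of_finite) (Summable.of_finite),
      ← pLaplacian_eq_tsum_subtype, ← pLaplacian_eq_tsum_subtype, hhharm v, hfharm v]
    ring
  have hS2 : (∑' q : {q : V × V // G.Adj q.1 q.2}, (h q.1.2 - f q.1.2) * Φ q) = 0 := by
    have H := hg2.hasSum.tsum_fiberwise (fun q => q.1.2)
    have hz : (fun v : V =>
        ∑' x : (fun q : {q : V × V // G.Adj q.1 q.2} => q.1.2) ⁻¹' {v},
          (h (x : {q : V × V // G.Adj q.1 q.2}).1.2 - f (x : {q : V × V // G.Adj q.1 q.2}).1.2)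
            * Φ (x : {q : V × V // G.Adj q.1 q.2})) = fun _ => (0:ℝ) := funext hfib
    rw [hz] at H
    exact H.unique hasSum_zero
  have hS1 : (∑' q : {q : V × V // G.Adj q.1 q.2}, (h q.1.1 - f q.1.1) * Φ q) = 0 := by
    have h3 : (∑' q : {q : V × V // G.Adj q.1 q.2},
        (h ((swapPair G) q).1.2 - f ((swapPair G) q).1.2) * Φ ((swapPair G) q))
        = ∑' q : {q : V × V // G.Adj q.1 q.2}, (h q.1.2 - f q.1.2) * Φ q :=
      (swapPair G).tsum_eq (fun q : {q : V × V // G.Adj q.1 q.2} => (h q.1.2 - f q.1.2) * Φ q)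
    rw [tsum_congr hg2sw, tsum_neg, hS2, neg_eq_zero] at h3
    exact h3
  -- total pairing is zero
  have hgT : Summable fun q : {q : V × V // G.Adj q.1 q.2} =>
      ((h q.1.1 - f q.1.1) - (h q.1.2 - f q.1.2)) * Φ q := by
    have h1 := hg1.sub hg2
    have h2 : (fun q : {q : V × V // G.Adj q.1 q.2} =>
        (h q.1.1 - f q.1.1) * Φ q - (h q.1.2 - f q.1.2) * Φ q)
        = fun q => ((h q.1.1 - f q.1.1) - (h q.1.2 - f q.1.2)) * Φ q :=
      funext fun q => by ring
    rwa [h2] at h1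
  have hT : (∑' q : {q : V × V // G.Adj q.1 q.2},
      ((h q.1.1 - f q.1.1) - (h q.1.2 - f q.1.2)) * Φ q) = 0 := by
    have h2 : (fun q : {q : V × V // G.Adj q.1 q.2} =>
        ((h q.1.1 - f q.1.1) - (h q.1.2 - f q.1.2)) * Φ q)
        = fun q => (h q.1.1 - f q.1.1) * Φ q - (h q.1.2 - f q.1.2) * Φ q :=
      funext fun q => by ring
    rw [h2, Summable.tsum_sub hg1 hg2, hS1, hS2]; ring
  have hnn : ∀ q : {q : V × V // G.Adj q.1 q.2},
      0 ≤ ((h q.1.1 - f q.1.1) - (h q.1.2 - f q.1.2)) * Φ q := by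
    intro q
    have hrw : (h q.1.1 - f q.1.1) - (h q.1.2 - f q.1.2)
        = (h q.1.1 - h q.1.2) - (f q.1.1 - f q.1.2) := by ring
    rw [hrw]
    exact phiR_key_nonneg hp _ _
  have hkey : ∀ q : {q : V × V // G.Adj q.1 q.2},
      ((h q.1.1 - f q.1.1) - (h q.1.2 - f q.1.2)) * Φ q = 0 := by
    intro q
    have hle := Summable.le_tsum hgT q (fun j _ => hnn j)
    rw [hT] at hle
    exact le_antisymm hle (hnn q)
  have hedge : ∀ a b : V, G.Adj a b → h a - f a = h b - f b := by
    intro a b hab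
    by_contra hne
    have hABne : h a - h b ≠ f a - f b := fun hEq => hne (by linarith)
    have hpos := phiR_key_pos (p := p) hp hABne
    have h0 := hkey ⟨(a, b), hab⟩
    have hrw : ((h a - f a) - (h b - f b)) = (h a - h b) - (f a - f b) := by ring
    rw [show ((h (⟨(a,b),hab⟩ : {q : V × V // G.Adj q.1 q.2}).1.1
        - f (⟨(a,b),hab⟩ : {q : V × V // G.Adj q.1 q.2}).1.1)
        - (h (⟨(a,b),hab⟩ : {q : V × V // G.Adj q.1 q.2}).1.2
        - f (⟨(a,b),hab⟩ : {q : V × V // G.Adj q.1 q.2}).1.2))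
        = (h a - h b) - (f a - f b) from by ring] at h0
    have hPhieq : Φ ⟨(a, b), hab⟩ = phiR p (h a - h b) - phiR p (f a - f b) := rfl
    rw [hPhieq] at h0
    linarith
  -- conclude via connectedness
  have hwalk : ∀ {a b : V} (w : G.Walk a b), h a - f a = h b - f b := by
    intro a b w
    induction w with
    | nil => rfl
    | cons hadj _ ih => exact (hedge _ _ hadj).trans ih
  obtain ⟨v₀⟩ := (inferInstance : Nonempty V)
  have hconst : ∀ v, h v - f v = h v₀ - f v₀ := fun v =>
    (hconn.preconnected v v₀).elim fun w => hwalk w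
  have hc0 : |h v₀ - f v₀| ^ p = 0 := by
    have h1 : Tendsto (fun v : V => |h v - f v| ^ p) cofinite (𝓝 0) :=
      hdiff.tendsto_cofinite_zero
    have h2 : (fun v : V => |h v - f v| ^ p) = fun _ => |h v₀ - f v₀| ^ p :=
      funext fun v => by rw [hconst v]
    rw [h2] at h1
    exact tendsto_nhds_unique tendsto_const_nhds h1
  have hzero : h v₀ - f v₀ = 0 := by
    by_contra hne
    have hpos : 0 < |h v₀ - f v₀| := abs_pos.2 (by exact fun hh => hne hh)
    exact absurd hc0 (ne_of_gt (Real.rpow_pos_of_pos hpos p))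
  funext v
  have := hconst v
  linarith
end

section
/- Let d ≥ 1 be an integer, C ≥ 1 a real, and let G = (V,E) be a connected, locally finite simple graph with uniformly bounded vertex degrees. Let (P_v)_{v∈V} be a quasi-sphere packing of G in ℝ^d with constant C such that all the sets P_v are contained in a fixed bounded subset of ℝ^d. Define m : E → (0,∞) by m({u,v}) = diam(P_u) + diam(P_v). Then Σ_{e∈E} m(e)^d < ∞, i.e. m is an L^d metric on G. -/
open Filter Topology Metric
open scoped ENNReal Classical

section PackingAux

open MeasureTheory

lemma packing_add_pow_le (a b : ℝ) (ha : 0 ≤ a) (hb : 0 ≤ b) (d : ℕ) :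
    (a + b) ^ d ≤ 2 ^ d * (a ^ d + b ^ d) := by
  have h1 : a + b ≤ 2 * max a b := by
    have := le_max_left a b
    have := le_max_right a b
    linarith
  calc (a + b) ^ d ≤ (2 * max a b) ^ d := by
        exact pow_le_pow_left₀ (add_nonneg ha hb) h1 d
    _ = 2 ^ d * (max a b) ^ d := by rw [mul_pow]
    _ ≤ 2 ^ d * (a ^ d + b ^ d) := by
        apply mul_le_mul_of_nonneg_left _ (by positivity)
        rcases max_choice a b with h | h <;> rw [h]
        · exact le_add_of_nonneg_right (pow_nonneg hb d)
        · exact le_add_of_nonneg_left (pow_nonneg ha d)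

set_option maxHeartbeats 1000000 in
lemma packing_summable_diam_pow {V : Type*} (d : ℕ) (hd : 1 ≤ d) (C : ℝ) (hC : 1 ≤ C)
    (G : SimpleGraph V)
    (P : V → Set (EuclideanSpace ℝ (Fin d))) (hP : IsQuasiSpherePacking G d C P)
    (hbounded : Bornology.IsBounded (⋃ v, P v)) :
    Summable fun v => Metric.diam (P v) ^ d := by
  obtain ⟨hcomp, ⟨z, r, hzr⟩, hdisj, hadj⟩ := hP
  obtain ⟨R, hR⟩ := hbounded.subset_closedBall 0
  haveI : Nonempty (Fin d) := ⟨⟨0, hd⟩⟩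
  set c : ℝ≥0∞ := volume (ball (0 : EuclideanSpace ℝ (Fin d)) 1) with hc_def
  set B : ℝ≥0∞ := volume (closedBall (0 : EuclideanSpace ℝ (Fin d)) R) with hB_def
  have hc0 : c ≠ 0 := (measure_ball_pos _ _ one_pos).ne'
  have hcT : c ≠ ⊤ := measure_ball_lt_top.ne
  have hBT : B ≠ ⊤ := measure_closedBall_lt_top.ne
  have hKT : B / c ≠ ⊤ := (ENNReal.div_lt_top hBT hc0).ne
  have hball_vol : ∀ v : V, volume (ball (z v) (r v)) = ENNReal.ofReal (r v ^ d) * c := by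
    intro v
    rw [Measure.addHaar_ball volume (z v) (hzr v).1.le, finrank_euclideanSpace_fin]
  have hball_sub : ∀ v : V, ball (z v) (r v) ⊆ P v := fun v =>
    ball_subset_closedBall.trans (hzr v).2.1
  have hball_int : ∀ v : V, ball (z v) (r v) ⊆ interior (P v) := fun v =>
    isOpen_ball.subset_interior_iff.2 (hball_sub v)
  -- summability of r^d
  have hr_sum : Summable fun v => r v ^ d := by
    apply summable_of_sum_le (c := (B / c).toReal)
      (fun v => pow_nonneg (hzr v).1.le d)
    intro s
    have hpd : (↑s : Set V).PairwiseDisjoint fun v => ball (z v) (r v) := by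
      intro u _ v _ huv
      exact (hdisj huv).mono (hball_int u) (hball_int v)
    have hmeas := measure_biUnion_finset (μ := volume) hpd fun v _ => measurableSet_ball
    have hsub : (⋃ v ∈ s, ball (z v) (r v)) ⊆ closedBall (0 : EuclideanSpace ℝ (Fin d)) R := by
      intro x hx
      simp only [Set.mem_iUnion] at hx
      obtain ⟨v, _, hxv⟩ := hx
      exact hR (Set.mem_iUnion.2 ⟨v, hball_sub v hxv⟩)
    have hle : ∑ v ∈ s, ENNReal.ofReal (r v ^ d) * c ≤ B := by
      calc ∑ v ∈ s, ENNReal.ofReal (r v ^ d) * c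
          = ∑ v ∈ s, volume (ball (z v) (r v)) := by
            exact Finset.sum_congr rfl fun v _ => (hball_vol v).symm
        _ = volume (⋃ v ∈ s, ball (z v) (r v)) := hmeas.symm
        _ ≤ B := measure_mono hsub
    rw [← Finset.sum_mul] at hle
    have hle2 : ∑ v ∈ s, ENNReal.ofReal (r v ^ d) ≤ B / c :=
      (ENNReal.le_div_iff_mul_le (Or.inl hc0) (Or.inl hcT)).2 hle
    rw [← ENNReal.ofReal_sum_of_nonneg (fun v _ => pow_nonneg (hzr v).1.le d)] at hle2
    exact (ENNReal.ofReal_le_iff_le_toReal hKT).1 hle2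
  -- diam bound
  have hdiam : ∀ v, Metric.diam (P v) ≤ 2 * C * r v := by
    intro v
    have h1 : Metric.diam (P v) ≤ Metric.diam (closedBall (z v) (C * r v)) :=
      Metric.diam_mono (hzr v).2.2 isBounded_closedBall
    have h2 : Metric.diam (closedBall (z v) (C * r v)) ≤ 2 * (C * r v) :=
      Metric.diam_closedBall (mul_nonneg (by linarith) (hzr v).1.le)
    linarith
  refine Summable.of_nonneg_of_le (fun v => pow_nonneg Metric.diam_nonneg d)
    (f := fun v => (2 * C) ^ d * r v ^ d) (fun v => ?_) (hr_sum.mul_left _)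
  calc Metric.diam (P v) ^ d ≤ (2 * C * r v) ^ d :=
        pow_le_pow_left₀ Metric.diam_nonneg (hdiam v) d
    _ = (2 * C) ^ d * r v ^ d := mul_pow _ _ _

lemma packing_summable_pairs_fst {V : Type*} (G : SimpleGraph V) (hlf : LocFin G) {D : ℕ}
    (hD : ∀ v, (G.neighborSet v).ncard ≤ D) {F : V → ℝ} (hF0 : ∀ v, 0 ≤ F v)
    (hF : Summable F) :
    Summable fun q : {q : V × V // G.Adj q.1 q.2} => F q.1.1 := by
  have hFt : 0 ≤ ∑' v, F v := tsum_nonneg hF0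
  apply summable_of_sum_le (c := (D : ℝ) * ∑' v, F v) (fun q => hF0 _)
  intro s
  classical
  rw [Finset.sum_comp (s := s) F (fun q : {q : V × V // G.Adj q.1 q.2} => q.1.1)]
  have hcard : ∀ v, ({q ∈ s | q.1.1 = v} : Finset _).card ≤ D := by
    intro v
    have h1 : ({q ∈ s | q.1.1 = v} : Finset _).card ≤ (hlf v).toFinset.card := by
      apply Finset.card_le_card_of_injOn (fun q => q.1.2)
      · intro q hq
        rw [Finset.mem_coe, Finset.mem_filter] at hq
        rw [Finset.mem_coe, Set.Finite.mem_toFinset]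
        have : G.Adj v q.1.2 := hq.2 ▸ q.2
        exact this
      · intro q hq q' hq' hqq'
        rw [Finset.mem_coe, Finset.mem_filter] at hq hq'
        apply Subtype.ext
        apply Prod.ext
        · rw [hq.2, hq'.2]
        · exact hqq'
    have h2 : (G.neighborSet v).ncard = (hlf v).toFinset.card :=
      Set.ncard_eq_toFinset_card (G.neighborSet v) (hlf v)
    have h3 := hD v
    omega
  calc ∑ v ∈ s.image (fun q => q.1.1), ({q ∈ s | q.1.1 = v} : Finset _).card • F v
      ≤ ∑ v ∈ s.image (fun q => q.1.1), (D : ℝ) * F v := by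
        apply Finset.sum_le_sum
        intro v _
        rw [nsmul_eq_mul]
        exact mul_le_mul_of_nonneg_right (Nat.cast_le.2 (hcard v)) (hF0 v)
    _ = (D : ℝ) * ∑ v ∈ s.image (fun q => q.1.1), F v := by rw [Finset.mul_sum]
    _ ≤ (D : ℝ) * ∑' v, F v := by
        apply mul_le_mul_of_nonneg_left _ (Nat.cast_nonneg D)
        exact Summable.sum_le_tsum _ (fun v _ => hF0 v) hF

lemma packing_summable_pairs_snd {V : Type*} (G : SimpleGraph V) (hlf : LocFin G) {D : ℕ}
    (hD : ∀ v, (G.neighborSet v).ncard ≤ D) {F : V → ℝ} (hF0 : ∀ v, 0 ≤ F v)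
    (hF : Summable F) :
    Summable fun q : {q : V × V // G.Adj q.1 q.2} => F q.1.2 := by
  have hFt : 0 ≤ ∑' v, F v := tsum_nonneg hF0
  apply summable_of_sum_le (c := (D : ℝ) * ∑' v, F v) (fun q => hF0 _)
  intro s
  classical
  rw [Finset.sum_comp (s := s) F (fun q : {q : V × V // G.Adj q.1 q.2} => q.1.2)]
  have hcard : ∀ v, ({q ∈ s | q.1.2 = v} : Finset _).card ≤ D := by
    intro v
    have h1 : ({q ∈ s | q.1.2 = v} : Finset _).card ≤ (hlf v).toFinset.card := by
      apply Finset.card_le_card_of_injOn (fun q => q.1.1)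
      · intro q hq
        rw [Finset.mem_coe, Finset.mem_filter] at hq
        rw [Finset.mem_coe, Set.Finite.mem_toFinset]
        have : G.Adj v q.1.1 := (hq.2 ▸ q.2).symm
        exact this
      · intro q hq q' hq' hqq'
        rw [Finset.mem_coe, Finset.mem_filter] at hq hq'
        apply Subtype.ext
        apply Prod.ext
        · exact hqq'
        · rw [hq.2, hq'.2]
    have h2 : (G.neighborSet v).ncard = (hlf v).toFinset.card :=
      Set.ncard_eq_toFinset_card (G.neighborSet v) (hlf v)
    have h3 := hD v
    omega
  calc ∑ v ∈ s.image (fun q => q.1.2), ({q ∈ s | q.1.2 = v} : Finset _).card • F v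
      ≤ ∑ v ∈ s.image (fun q => q.1.2), (D : ℝ) * F v := by
        apply Finset.sum_le_sum
        intro v _
        rw [nsmul_eq_mul]
        exact mul_le_mul_of_nonneg_right (Nat.cast_le.2 (hcard v)) (hF0 v)
    _ = (D : ℝ) * ∑ v ∈ s.image (fun q => q.1.2), F v := by rw [Finset.mul_sum]
    _ ≤ (D : ℝ) * ∑' v, F v := by
        apply mul_le_mul_of_nonneg_left _ (Nat.cast_nonneg D)
        exact Summable.sum_le_tsum _ (fun v _ => hF0 v) hF

lemma packing_edge_summable {V : Type*} (G : SimpleGraph V) (hlf : LocFin G) {D : ℕ}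
    (hD : ∀ v, (G.neighborSet v).ncard ≤ D) (d : ℕ) {g : V → ℝ} (hg0 : ∀ v, 0 ≤ g v)
    (hg : Summable fun v => g v ^ d) :
    Summable fun e : G.edgeSet =>
      (Sym2.lift ⟨fun u v => g u + g v, fun u v => add_comm _ _⟩ (e : Sym2 V)) ^ (d : ℝ) := by
  classical
  have hF0 : ∀ v, 0 ≤ g v ^ d := fun v => pow_nonneg (hg0 v) d
  have h1 : Summable fun q : {q : V × V // G.Adj q.1 q.2} => g q.1.1 ^ d :=
    packing_summable_pairs_fst G hlf hD hF0 hg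
  have h2 : Summable fun q : {q : V × V // G.Adj q.1 q.2} => g q.1.2 ^ d :=
    packing_summable_pairs_snd G hlf hD hF0 hg
  have hpairs : Summable fun q : {q : V × V // G.Adj q.1 q.2} => (g q.1.1 + g q.1.2) ^ d := by
    have hsum12 : Summable fun q : {q : V × V // G.Adj q.1 q.2} =>
        g q.1.1 ^ d + g q.1.2 ^ d := h1.add h2
    have hbound : Summable fun q : {q : V × V // G.Adj q.1 q.2} =>
        (2 : ℝ) ^ d * (g q.1.1 ^ d + g q.1.2 ^ d) := hsum12.mul_left _
    exact Summable.of_nonneg_of_le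
      (fun q => pow_nonneg (add_nonneg (hg0 _) (hg0 _)) d)
      (fun q => packing_add_pow_le _ _ (hg0 _) (hg0 _) d)
      hbound
  have hex : ∀ e : G.edgeSet, ∃ q : {q : V × V // G.Adj q.1 q.2},
      s(q.1.1, q.1.2) = (e : Sym2 V) := by
    rintro ⟨e, he⟩
    induction e using Sym2.ind with
    | _ u v => exact ⟨⟨(u, v), he⟩, rfl⟩
  choose ι hι using hex
  have hinj : Function.Injective ι := by
    intro e e' h
    apply Subtype.ext
    rw [← hι e, ← hι e', h]
  have heq : (fun e : G.edgeSet =>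
      (Sym2.lift ⟨fun u v => g u + g v, fun u v => add_comm _ _⟩ (e : Sym2 V)) ^ (d : ℝ)) =
      fun e : G.edgeSet => (g (ι e).1.1 + g (ι e).1.2) ^ d := by
    funext e
    rw [← hι e, Sym2.lift_mk, Real.rpow_natCast]
  rw [heq]
  exact hpairs.comp_injective hinj

end PackingAux

set_option maxHeartbeats 1000000 in
/-- for a bounded quasi-sphere packing of a bounded-degree graph in `ℝ^d`,
the metric `m({u,v}) = diam (P u) + diam (P v)` is an `L^d` metric. -/
theorem packing_metric_Lp {V : Type*} (d : ℕ) (hd : 1 ≤ d) (C : ℝ) (hC : 1 ≤ C)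
    (G : SimpleGraph V) (hconn : G.Connected) (hlf : LocFin G) (hbd : BddDeg G)
    (P : V → Set (EuclideanSpace ℝ (Fin d))) (hP : IsQuasiSpherePacking G d C P)
    (hbounded : Bornology.IsBounded (⋃ v, P v)) :
    Summable fun e : G.edgeSet =>
      (Sym2.lift ⟨fun u v => Metric.diam (P u) + Metric.diam (P v),
        fun u v => add_comm _ _⟩ (e : Sym2 V)) ^ (d : ℝ) := by
  obtain ⟨D, hD⟩ := hbd
  have hF : Summable fun v => Metric.diam (P v) ^ d :=
    packing_summable_diam_pow d hd C hC G P hP hbounded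
  exact packing_edge_summable G hlf hD d (g := fun v => Metric.diam (P v))
    (fun v => Metric.diam_nonneg) hF
end
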